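/- arXiv:1905.02519 — 5 statements merged into one kernel-verified Lean document; each statement's English description precedes it below -/
import Mathlib

section
/- Let X = ⨆_{λ∈Λ} G_λ be a multiple conjugation quandle, R a ring, and let f₁, f₂ : X × X → R and f₃, f₄ : ⨆_{λ∈Λ} (G_λ × G_λ) → R be maps. If the set ⨆_{λ∈Λ} (G_λ × R) with operations (x,u) ◁ (y,v) = (x ◁ y, f₁(x,y)u + f₂(x,y)v) and, on each G_λ × R, (a,u)(b,v) = (ab, f₃(a,b)u + f₄(a,b)v), is a multiple conjugation quandle (where R is regarded as a left R-module over itself), then f₁, f₂, f₃, f₄ satisfy conditions (0-i)–(4-iii). -/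
universe u v w x u' v'

/-- The raw data of a disjoint union of "groups" `G l` (with multiplication `mul`,
identity `one` and inversion `inv` on each component) together with a binary
operation `op` on the disjoint union `Σ l, G l`. -/
structure MCQData (Λ : Type u) (G : Λ → Type v) where
  mul : ∀ l : Λ, G l → G l → G l
  one : ∀ l : Λ, G l
  inv : ∀ l : Λ, G l → G l
  op  : (Σ l, G l) → (Σ l, G l) → (Σ l, G l)

namespace MCQData

variable {Λ : Type u} {G : Λ → Type v}

/-- Each component `G l` is a group with respect to the given data. -/
def IsGroupData (D : MCQData Λ G) : Prop :=
  (∀ (l : Λ) (a b c : G l), D.mul l (D.mul l a b) c = D.mul l a (D.mul l b c)) ∧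
  (∀ (l : Λ) (a : G l), D.mul l (D.one l) a = a) ∧
  (∀ (l : Λ) (a : G l), D.mul l a (D.one l) = a) ∧
  (∀ (l : Λ) (a : G l), D.mul l (D.inv l a) a = D.one l) ∧
  (∀ (l : Λ) (a : G l), D.mul l a (D.inv l a) = D.one l)

/-- `D` is a multiple conjugation quandle (MCQ): each component is a group,
the operation restricts to conjugation on each component, and the axioms of an
MCQ hold.  In the last axiom, `a ◁ x` and `b ◁ x` lie in a common component
`G m` and `(ab) ◁ x = (a ◁ x)(b ◁ x)` there. -/
def IsMCQ (D : MCQData Λ G) : Prop :=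
  D.IsGroupData ∧
  (∀ (l : Λ) (a b : G l),
    D.op ⟨l, a⟩ ⟨l, b⟩ = ⟨l, D.mul l (D.mul l (D.inv l b) a) b⟩) ∧
  (∀ (x : Σ l, G l) (l : Λ), D.op x ⟨l, D.one l⟩ = x) ∧
  (∀ (x : Σ l, G l) (l : Λ) (a b : G l),
    D.op x ⟨l, D.mul l a b⟩ = D.op (D.op x ⟨l, a⟩) ⟨l, b⟩) ∧
  (∀ x y z : Σ l, G l, D.op (D.op x y) z = D.op (D.op x z) (D.op y z)) ∧
  (∀ (l : Λ) (a b : G l) (x : Σ l, G l), ∃ (m : Λ) (a' b' : G m),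
    D.op ⟨l, a⟩ x = ⟨m, a'⟩ ∧ D.op ⟨l, b⟩ x = ⟨m, b'⟩ ∧
    D.op ⟨l, D.mul l a b⟩ x = ⟨m, D.mul m a' b'⟩)

/-- `(f₁, f₂)` is an MCQ Alexander pair for the MCQ `D` with values in the ring `R`. -/
def IsMCQAlexanderPair (D : MCQData Λ G) {R : Type w} [Ring R]
    (f₁ f₂ : (Σ l, G l) → (Σ l, G l) → R) : Prop :=
  (∀ (l : Λ) (a b : G l),
    f₁ ⟨l, a⟩ ⟨l, b⟩ + f₂ ⟨l, a⟩ ⟨l, b⟩ = f₁ ⟨l, a⟩ ⟨l, D.mul l (D.inv l a) b⟩) ∧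
  (∀ (l : Λ) (a b : G l) (x : Σ l, G l), f₁ ⟨l, a⟩ x = f₁ ⟨l, b⟩ x) ∧
  (∀ (l : Λ) (a b : G l) (x : Σ l, G l),
    f₂ ⟨l, D.mul l a b⟩ x =
      f₂ ⟨l, a⟩ x + f₁ (D.op ⟨l, b⟩ x) (D.op ⟨l, D.inv l a⟩ x) * f₂ ⟨l, b⟩ x) ∧
  (∀ (x : Σ l, G l) (l : Λ), f₁ x ⟨l, D.one l⟩ = 1) ∧
  (∀ (x : Σ l, G l) (l : Λ) (a b : G l),
    f₁ x ⟨l, D.mul l a b⟩ = f₁ (D.op x ⟨l, a⟩) ⟨l, b⟩ * f₁ x ⟨l, a⟩) ∧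
  (∀ (x : Σ l, G l) (l : Λ) (a b : G l),
    f₂ x ⟨l, D.mul l a b⟩ = f₁ (D.op x ⟨l, a⟩) ⟨l, b⟩ * f₂ x ⟨l, a⟩) ∧
  (∀ x y z : Σ l, G l, f₁ (D.op x y) z * f₁ x y = f₁ (D.op x z) (D.op y z) * f₁ x z) ∧
  (∀ x y z : Σ l, G l, f₁ (D.op x y) z * f₂ x y = f₂ (D.op x z) (D.op y z) * f₁ y z) ∧
  (∀ x y z : Σ l, G l, f₂ (D.op x y) z =
    f₁ (D.op x z) (D.op y z) * f₂ x z + f₂ (D.op x z) (D.op y z) * f₂ y z)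

/-- An MCQ homomorphism: `φ` preserves the operation `◁`, and for `a, b` in a common
component, `φ a`, `φ b` lie in a common component and `φ (ab) = (φ a)(φ b)`. -/
def IsMCQHom {Λ' : Type u'} {G' : Λ' → Type v'} (D : MCQData Λ G)
    (D' : MCQData Λ' G') (φ : (Σ l, G l) → (Σ l', G' l')) : Prop :=
  (∀ x y : Σ l, G l, φ (D.op x y) = D'.op (φ x) (φ y)) ∧
  (∀ (l : Λ) (a b : G l), ∃ (m : Λ') (a' b' : G' m),
    φ ⟨l, a⟩ = ⟨m, a'⟩ ∧ φ ⟨l, b⟩ = ⟨m, b'⟩ ∧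
    φ ⟨l, D.mul l a b⟩ = ⟨m, D'.mul m a' b'⟩)

/-- Conditions (0-i)--(0-iv) for the maps `f₃, f₄ : ⨆ (G l × G l) → R`. -/
def Conds0 (D : MCQData Λ G) {R : Type w} [Ring R]
    (f₃ f₄ : ∀ l : Λ, G l → G l → R) : Prop :=
  (∀ (l : Λ) (a b : G l), IsUnit (f₃ l a b) ∧ IsUnit (f₄ l a b)) ∧
  (∀ (l : Λ) (a b c : G l), f₃ l (D.mul l a b) c * f₃ l a b = f₃ l a (D.mul l b c)) ∧
  (∀ (l : Λ) (a b c : G l),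
    f₃ l (D.mul l a b) c * f₄ l a b = f₄ l a (D.mul l b c) * f₃ l b c) ∧
  (∀ (l : Λ) (a b c : G l), f₄ l (D.mul l a b) c = f₄ l a (D.mul l b c) * f₄ l b c)

/-- Conditions (0-i)--(4-iii) for the quadruple `(f₁, f₂, f₃, f₄)`.
In conditions (4-i)--(4-iii), the decompositions `a ◁ x = ⟨m, a'⟩` and
`b ◁ x = ⟨m, b'⟩` express that `a ◁ x` and `b ◁ x` lie in a common component `G m`. -/
def Conds (D : MCQData Λ G) {R : Type w} [Ring R]
    (f₁ f₂ : (Σ l, G l) → (Σ l, G l) → R) (f₃ f₄ : ∀ l : Λ, G l → G l → R) : Prop :=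
  Conds0 D f₃ f₄ ∧
  (∀ (l : Λ) (a b : G l),
    f₁ ⟨l, a⟩ ⟨l, b⟩ = f₄ l (D.inv l b) (D.mul l a b) * f₃ l a b) ∧
  (∀ (l : Λ) (a b : G l),
    f₂ ⟨l, a⟩ ⟨l, b⟩ =
      -(f₃ l (D.inv l b) (D.mul l a b) * f₄ l (D.inv l b) (D.one l) * f₃ l b (D.inv l b)) +
        f₄ l (D.inv l b) (D.mul l a b) * f₄ l a b) ∧
  (∀ (x : Σ l, G l) (l : Λ), f₁ x ⟨l, D.one l⟩ = 1) ∧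
  (∀ (x : Σ l, G l) (l : Λ) (a b : G l),
    f₁ x ⟨l, D.mul l a b⟩ = f₁ (D.op x ⟨l, a⟩) ⟨l, b⟩ * f₁ x ⟨l, a⟩) ∧
  (∀ (x : Σ l, G l) (l : Λ) (a b : G l),
    f₂ x ⟨l, D.mul l a b⟩ * f₃ l a b = f₁ (D.op x ⟨l, a⟩) ⟨l, b⟩ * f₂ x ⟨l, a⟩) ∧
  (∀ (x : Σ l, G l) (l : Λ) (a b : G l),
    f₂ x ⟨l, D.mul l a b⟩ * f₄ l a b = f₂ (D.op x ⟨l, a⟩) ⟨l, b⟩) ∧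
  (∀ x y z : Σ l, G l, f₁ (D.op x y) z * f₁ x y = f₁ (D.op x z) (D.op y z) * f₁ x z) ∧
  (∀ x y z : Σ l, G l, f₁ (D.op x y) z * f₂ x y = f₂ (D.op x z) (D.op y z) * f₁ y z) ∧
  (∀ x y z : Σ l, G l, f₂ (D.op x y) z =
    f₁ (D.op x z) (D.op y z) * f₂ x z + f₂ (D.op x z) (D.op y z) * f₂ y z) ∧
  (∀ (l : Λ) (a b : G l) (x : Σ l, G l) (m : Λ) (a' b' : G m),
    D.op ⟨l, a⟩ x = ⟨m, a'⟩ → D.op ⟨l, b⟩ x = ⟨m, b'⟩ →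
      f₁ ⟨l, D.mul l a b⟩ x * f₃ l a b = f₃ m a' b' * f₁ ⟨l, a⟩ x) ∧
  (∀ (l : Λ) (a b : G l) (x : Σ l, G l) (m : Λ) (a' b' : G m),
    D.op ⟨l, a⟩ x = ⟨m, a'⟩ → D.op ⟨l, b⟩ x = ⟨m, b'⟩ →
      f₁ ⟨l, D.mul l a b⟩ x * f₄ l a b = f₄ m a' b' * f₁ ⟨l, b⟩ x) ∧
  (∀ (l : Λ) (a b : G l) (x : Σ l, G l) (m : Λ) (a' b' : G m),
    D.op ⟨l, a⟩ x = ⟨m, a'⟩ → D.op ⟨l, b⟩ x = ⟨m, b'⟩ →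
      f₂ ⟨l, D.mul l a b⟩ x = f₃ m a' b' * f₂ ⟨l, a⟩ x + f₄ m a' b' * f₂ ⟨l, b⟩ x)

/-- The multiplication `(a,u)(b,v) = (ab, f₃(a,b)u + f₄(a,b)v)` on `G l × M`. -/
def quadMul (D : MCQData Λ G) {R : Type w} [Ring R] (f₃ f₄ : ∀ l : Λ, G l → G l → R)
    (M : Type x) [AddCommGroup M] [Module R M] (l : Λ) (p q : G l × M) : G l × M :=
  (D.mul l p.1 q.1, f₃ l p.1 q.1 • p.2 + f₄ l p.1 q.1 • q.2)

/-- The operation `(x,u) ◁ (y,v) = (x ◁ y, f₁(x,y)u + f₂(x,y)v)` on `⨆ (G l × M)`. -/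
def quadOp (D : MCQData Λ G) {R : Type w} [Ring R]
    (f₁ f₂ : (Σ l, G l) → (Σ l, G l) → R) (M : Type x) [AddCommGroup M] [Module R M]
    (z w : Σ l, G l × M) : Σ l, G l × M :=
  ⟨(D.op ⟨z.1, z.2.1⟩ ⟨w.1, w.2.1⟩).1,
    ((D.op ⟨z.1, z.2.1⟩ ⟨w.1, w.2.1⟩).2,
      f₁ ⟨z.1, z.2.1⟩ ⟨w.1, w.2.1⟩ • z.2.2 + f₂ ⟨z.1, z.2.1⟩ ⟨w.1, w.2.1⟩ • w.2.2)⟩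

/-- The data `X̃(f₁,f₂,f₃,f₄)` on `⨆ (G l × M)`. -/
def quadExt (D : MCQData Λ G) {R : Type w} [Ring R]
    (f₁ f₂ : (Σ l, G l) → (Σ l, G l) → R) (f₃ f₄ : ∀ l : Λ, G l → G l → R)
    (M : Type x) [AddCommGroup M] [Module R M] : MCQData Λ (fun l => G l × M) where
  mul := quadMul D f₃ f₄ M
  one l := (D.one l, 0)
  inv l p := (D.inv l p.1, -((f₄ l (D.inv l p.1) (D.one l) * f₃ l p.1 (D.inv l p.1)) • p.2))
  op := quadOp D f₁ f₂ M

/-- The multiplication `(a,u)(b,v) = (ab, u + f₁(a,a⁻¹)v)` on `G l × M`. -/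
def alexMul (D : MCQData Λ G) {R : Type w} [Ring R]
    (f₁ : (Σ l, G l) → (Σ l, G l) → R) (M : Type x) [AddCommGroup M] [Module R M]
    (l : Λ) (p q : G l × M) : G l × M :=
  (D.mul l p.1 q.1, p.2 + f₁ ⟨l, p.1⟩ ⟨l, D.inv l p.1⟩ • q.2)

/-- The data `X̃(f₁,f₂)` on `⨆ (G l × M)`, with identity `(e_l, 0)` and
inverse `(a,u)⁻¹ = (a⁻¹, -f₁(a,a)u)` on each component. -/
def alexExt (D : MCQData Λ G) {R : Type w} [Ring R]
    (f₁ f₂ : (Σ l, G l) → (Σ l, G l) → R) (M : Type x) [AddCommGroup M] [Module R M] :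
    MCQData Λ (fun l => G l × M) where
  mul := alexMul D f₁ M
  one l := (D.one l, 0)
  inv l p := (D.inv l p.1, -(f₁ ⟨l, p.1⟩ ⟨l, p.1⟩ • p.2))
  op := quadOp D f₁ f₂ M

/-- `(m, o, i)` satisfies the group axioms on `α`. -/
def GroupAxiomsOn {α : Type x} (m : α → α → α) (o : α) (i : α → α) : Prop :=
  (∀ a b c : α, m (m a b) c = m a (m b c)) ∧ (∀ a : α, m o a = a) ∧ (∀ a : α, m a o = a) ∧
  (∀ a : α, m (i a) a = o) ∧ (∀ a : α, m a (i a) = o)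

/-- The relation `(f₁,f₂,f₃,f₄) ∼ (g₁,g₂,g₃,g₄)`, witnessed by a map `h : X → Rˣ`. -/
def QuadRel (D : MCQData Λ G) {R : Type w} [Ring R]
    (f₁ f₂ g₁ g₂ : (Σ l, G l) → (Σ l, G l) → R)
    (f₃ f₄ g₃ g₄ : ∀ l : Λ, G l → G l → R) : Prop :=
  ∃ h : (Σ l, G l) → Rˣ,
    (∀ x y : Σ l, G l, (h (D.op x y) : R) * f₁ x y = g₁ x y * (h x : R)) ∧
    (∀ x y : Σ l, G l, (h (D.op x y) : R) * f₂ x y = g₂ x y * (h y : R)) ∧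
    (∀ (l : Λ) (a b : G l),
      (h ⟨l, D.mul l a b⟩ : R) * f₃ l a b = g₃ l a b * (h ⟨l, a⟩ : R)) ∧
    (∀ (l : Λ) (a b : G l),
      (h ⟨l, D.mul l a b⟩ : R) * f₄ l a b = g₄ l a b * (h ⟨l, b⟩ : R))

end MCQData

/-- if `⨆ (G l × R)` with `(x,u) ◁ (y,v) = (x ◁ y, f₁(x,y)u + f₂(x,y)v)`
and `(a,u)(b,v) = (ab, f₃(a,b)u + f₄(a,b)v)` is an MCQ (for some identity and
inversion data), then `(f₁,f₂,f₃,f₄)` satisfies conditions (0-i)--(4-iii). -/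
theorem mcq_gives_conds {Λ : Type u} {G : Λ → Type v} {R : Type w} [Ring R]
    (D : MCQData Λ G) (hD : D.IsMCQ)
    (f₁ f₂ : (Σ l, G l) → (Σ l, G l) → R) (f₃ f₄ : ∀ l : Λ, G l → G l → R)
    (h : ∃ (o : ∀ l : Λ, G l × R) (i : ∀ l : Λ, G l × R → G l × R),
      (MCQData.mk (MCQData.quadMul D f₃ f₄ R) o i (MCQData.quadOp D f₁ f₂ R) :
        MCQData Λ fun l => G l × R).IsMCQ) :
    MCQData.Conds D f₁ f₂ f₃ f₄ := by
  classical
  obtain ⟨o, i, hE⟩ := h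
  obtain ⟨⟨Gassoc, Glid, Grid, Glinv, Grinv⟩, Dconj, Did, Dmulab, Ddist, Dmulop⟩ := hD
  obtain ⟨⟨Eassoc, Elid, Erid, Elinv, Erinv⟩, Econj, Eid, Emulab, Edist, Emulop⟩ := hE
  -- derived group identities in D
  have hinvmul : ∀ (l : Λ) (b c : G l), D.mul l (D.inv l b) (D.mul l b c) = c := by
    intro l b c; rw [← Gassoc, Glinv, Glid]
  have hmulinv : ∀ (l : Λ) (a b : G l), D.mul l (D.mul l a b) (D.inv l b) = a := by
    intro l a b; rw [Gassoc, Grinv, Grid]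
  -- associativity of the extension, second components
  have key0 : ∀ (l : Λ) (a b c : G l) (u v w : R),
      f₃ l (D.mul l a b) c * (f₃ l a b * u + f₄ l a b * v) + f₄ l (D.mul l a b) c * w
      = f₃ l a (D.mul l b c) * u + f₄ l a (D.mul l b c) * (f₃ l b c * v + f₄ l b c * w) := by
    intro l a b c u v w
    have h1 := congrArg Prod.snd (Eassoc l (a, u) (b, v) (c, w))
    simpa [MCQData.quadMul, smul_eq_mul] using h1
  have c0ii : ∀ (l : Λ) (a b c : G l),
      f₃ l (D.mul l a b) c * f₃ l a b = f₃ l a (D.mul l b c) := by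
    intro l a b c; simpa using key0 l a b c 1 0 0
  have c0iii : ∀ (l : Λ) (a b c : G l),
      f₃ l (D.mul l a b) c * f₄ l a b = f₄ l a (D.mul l b c) * f₃ l b c := by
    intro l a b c; simpa using key0 l a b c 0 1 0
  have c0iv : ∀ (l : Λ) (a b c : G l),
      f₄ l (D.mul l a b) c = f₄ l a (D.mul l b c) * f₄ l b c := by
    intro l a b c; simpa using key0 l a b c 0 0 1
  -- components of the identities o l
  have hone1 : ∀ l, (o l).1 = D.one l := by
    intro l
    have h1 := congrArg Prod.fst (Elid l (D.one l, (0 : R)))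
    simp only [MCQData.quadMul] at h1
    rw [← h1, Grid]
  have hf4e : ∀ (l : Λ) (a : G l), f₄ l (D.one l) a = 1 := by
    intro l a
    have h0 := congrArg Prod.snd (Elid l (a, (0 : R)))
    have h1 := congrArg Prod.snd (Elid l (a, (1 : R)))
    simp only [MCQData.quadMul, smul_eq_mul, mul_zero, add_zero, mul_one] at h0 h1
    rw [hone1] at h0 h1
    rw [h0, zero_add] at h1
    exact h1
  have hf3e : ∀ (l : Λ) (a : G l), f₃ l a (D.one l) = 1 := by
    intro l a
    have h0 := congrArg Prod.snd (Erid l (a, (0 : R)))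
    have h1 := congrArg Prod.snd (Erid l (a, (1 : R)))
    simp only [MCQData.quadMul, smul_eq_mul, mul_zero, zero_add, mul_one] at h0 h1
    rw [hone1] at h0 h1
    rw [h0, add_zero] at h1
    exact h1
  have hone2 : ∀ l, (o l).2 = (0 : R) := by
    intro l
    have h0 := congrArg Prod.snd (Erid l (D.one l, (0 : R)))
    simp only [MCQData.quadMul, smul_eq_mul, mul_zero, zero_add] at h0
    rw [hone1, hf4e] at h0
    simpa using h0
  -- invertibility of f₄
  have hf4linv : ∀ (l : Λ) (b c : G l),
      f₄ l (D.inv l b) (D.mul l b c) * f₄ l b c = 1 := by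
    intro l b c
    have h1 := c0iv l (D.inv l b) b c
    rw [Glinv, hf4e] at h1
    exact h1.symm
  have hf4rinv : ∀ (l : Λ) (b c : G l),
      f₄ l b c * f₄ l (D.inv l b) (D.mul l b c) = 1 := by
    intro l b c
    have h1 := c0iv l b (D.inv l b) (D.mul l b c)
    rw [Grinv, hf4e, hinvmul] at h1
    exact h1.symm
  have hf4u : ∀ (l : Λ) (b c : G l), IsUnit (f₄ l b c) := by
    intro l b c
    exact ⟨⟨f₄ l b c, f₄ l (D.inv l b) (D.mul l b c), hf4rinv l b c, hf4linv l b c⟩, rfl⟩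
  -- invertibility of f₃
  have hf3linv : ∀ (l : Λ) (a b : G l),
      f₃ l (D.mul l a b) (D.inv l b) * f₃ l a b = 1 := by
    intro l a b
    have h1 := c0ii l a b (D.inv l b)
    rw [Grinv, hf3e] at h1
    exact h1
  have hf3rinv : ∀ (l : Λ) (a b : G l),
      f₃ l a b * f₃ l (D.mul l a b) (D.inv l b) = 1 := by
    intro l a b
    have h1 := c0ii l (D.mul l a b) (D.inv l b) b
    rw [hmulinv, Glinv, hf3e] at h1
    exact h1
  have hf3u : ∀ (l : Λ) (a b : G l), IsUnit (f₃ l a b) := by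
    intro l a b
    exact ⟨⟨f₃ l a b, f₃ l (D.mul l a b) (D.inv l b), hf3rinv l a b, hf3linv l a b⟩, rfl⟩
  -- components of the inverses i l
  have hinv1 : ∀ (l : Λ) (p : G l × R), (i l p).1 = D.inv l p.1 := by
    intro l p
    have h1 := congrArg Prod.fst (Erinv l p)
    simp only [MCQData.quadMul] at h1
    rw [hone1] at h1
    have h2 : D.mul l (D.inv l p.1) (D.mul l p.1 (i l p).1)
        = D.mul l (D.inv l p.1) (D.one l) := by rw [h1]
    rwa [hinvmul, Grid] at h2
  have hinv2 : ∀ (l : Λ) (b : G l) (v : R),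
      (i l (b, v)).2 = -(f₄ l (D.inv l b) (D.one l) * (f₃ l b (D.inv l b) * v)) := by
    intro l b v
    have h1 := congrArg Prod.snd (Erinv l (b, v))
    simp only [MCQData.quadMul, smul_eq_mul] at h1
    rw [hone2, hinv1] at h1
    have e1 : f₄ l (D.inv l b) (D.one l) * f₄ l b (D.inv l b) = 1 := by
      have := hf4linv l b (D.inv l b)
      rwa [Grinv] at this
    have h2 := congrArg (fun t => f₄ l (D.inv l b) (D.one l) * t) h1
    simp only [mul_add, mul_zero, ← mul_assoc, e1, one_mul] at h2
    rw [mul_assoc] at h2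
    exact eq_neg_of_add_eq_zero_right h2
  -- condition (1-i)
  have c1i : ∀ (l : Λ) (a b : G l),
      f₁ ⟨l, a⟩ ⟨l, b⟩ = f₄ l (D.inv l b) (D.mul l a b) * f₃ l a b := by
    intro l a b
    have h1 := congrArg (fun z => z.2.2) (Econj l (a, (1 : R)) (b, (0 : R)))
    simp only [MCQData.quadOp, MCQData.quadMul, smul_eq_mul, hinv1, hinv2,
      mul_zero, neg_zero, add_zero, zero_add, mul_one, mul_neg] at h1
    rw [h1, c0iii]
  -- condition (1-ii)
  have c1ii : ∀ (l : Λ) (a b : G l),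
      f₂ ⟨l, a⟩ ⟨l, b⟩ =
        -(f₃ l (D.inv l b) (D.mul l a b) * f₄ l (D.inv l b) (D.one l)
            * f₃ l b (D.inv l b)) +
          f₄ l (D.inv l b) (D.mul l a b) * f₄ l a b := by
    intro l a b
    have h1 := congrArg (fun z => z.2.2) (Econj l (a, (0 : R)) (b, (1 : R)))
    simp only [MCQData.quadOp, MCQData.quadMul, smul_eq_mul, hinv1, hinv2,
      mul_zero, neg_zero, add_zero, zero_add, mul_one, mul_neg] at h1
    rw [h1, ← mul_assoc, ← mul_assoc, c0ii, c0iv]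
  -- condition (2-i)
  have honep : ∀ l, o l = (D.one l, (0 : R)) := fun l => Prod.ext (hone1 l) (hone2 l)
  have c2i : ∀ (x : Σ l, G l) (l : Λ), f₁ x ⟨l, D.one l⟩ = 1 := by
    intro x l
    have h1 := congrArg (fun z => z.2.2) (Eid ⟨x.1, (x.2, (1 : R))⟩ l)
    simpa [MCQData.quadOp, smul_eq_mul, hone1, hone2, Sigma.eta] using h1
  -- conditions (2-ii)--(2-iv)
  have key2 : ∀ (x : Σ l, G l) (l : Λ) (a b : G l) (u v w : R),
      f₁ x ⟨l, D.mul l a b⟩ * w + f₂ x ⟨l, D.mul l a b⟩ * (f₃ l a b * u + f₄ l a b * v)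
      = f₁ (D.op x ⟨l, a⟩) ⟨l, b⟩ * (f₁ x ⟨l, a⟩ * w + f₂ x ⟨l, a⟩ * u)
        + f₂ (D.op x ⟨l, a⟩) ⟨l, b⟩ * v := by
    intro x l a b u v w
    have h1 := congrArg (fun z => z.2.2) (Emulab ⟨x.1, (x.2, w)⟩ l (a, u) (b, v))
    simpa [MCQData.quadOp, MCQData.quadMul, smul_eq_mul] using h1
  have c2ii : ∀ (x : Σ l, G l) (l : Λ) (a b : G l),
      f₁ x ⟨l, D.mul l a b⟩ = f₁ (D.op x ⟨l, a⟩) ⟨l, b⟩ * f₁ x ⟨l, a⟩ := by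
    intro x l a b; simpa using key2 x l a b 0 0 1
  have c2iii : ∀ (x : Σ l, G l) (l : Λ) (a b : G l),
      f₂ x ⟨l, D.mul l a b⟩ * f₃ l a b = f₁ (D.op x ⟨l, a⟩) ⟨l, b⟩ * f₂ x ⟨l, a⟩ := by
    intro x l a b; simpa using key2 x l a b 1 0 0
  have c2iv : ∀ (x : Σ l, G l) (l : Λ) (a b : G l),
      f₂ x ⟨l, D.mul l a b⟩ * f₄ l a b = f₂ (D.op x ⟨l, a⟩) ⟨l, b⟩ := by
    intro x l a b; simpa using key2 x l a b 0 1 0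
  -- conditions (3-i)--(3-iii)
  have key3 : ∀ (x y z : Σ l, G l) (p q r : R),
      f₁ (D.op x y) z * (f₁ x y * p + f₂ x y * q) + f₂ (D.op x y) z * r
      = f₁ (D.op x z) (D.op y z) * (f₁ x z * p + f₂ x z * r)
        + f₂ (D.op x z) (D.op y z) * (f₁ y z * q + f₂ y z * r) := by
    intro x y z p q r
    have h1 := congrArg (fun z => z.2.2)
      (Edist ⟨x.1, (x.2, p)⟩ ⟨y.1, (y.2, q)⟩ ⟨z.1, (z.2, r)⟩)
    simpa [MCQData.quadOp, smul_eq_mul] using h1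
  have c3i : ∀ x y z : Σ l, G l,
      f₁ (D.op x y) z * f₁ x y = f₁ (D.op x z) (D.op y z) * f₁ x z := by
    intro x y z; simpa using key3 x y z 1 0 0
  have c3ii : ∀ x y z : Σ l, G l,
      f₁ (D.op x y) z * f₂ x y = f₂ (D.op x z) (D.op y z) * f₁ y z := by
    intro x y z; simpa using key3 x y z 0 1 0
  have c3iii : ∀ x y z : Σ l, G l, f₂ (D.op x y) z =
      f₁ (D.op x z) (D.op y z) * f₂ x z + f₂ (D.op x z) (D.op y z) * f₂ y z := by
    intro x y z; simpa using key3 x y z 0 0 1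
  -- conditions (4-i)--(4-iii)
  have key4 : ∀ (l : Λ) (a b : G l) (x : Σ l, G l) (m : Λ) (a' b' : G m),
      D.op ⟨l, a⟩ x = ⟨m, a'⟩ → D.op ⟨l, b⟩ x = ⟨m, b'⟩ → ∀ u v w : R,
      f₁ ⟨l, D.mul l a b⟩ x * (f₃ l a b * u + f₄ l a b * v) + f₂ ⟨l, D.mul l a b⟩ x * w
      = f₃ m a' b' * (f₁ ⟨l, a⟩ x * u + f₂ ⟨l, a⟩ x * w)
        + f₄ m a' b' * (f₁ ⟨l, b⟩ x * v + f₂ ⟨l, b⟩ x * w) := by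
    intro l a b x m a' b' ha hb u v w
    obtain ⟨m₀, A', B', h1, h2, h3⟩ := Emulop l (a, u) (b, v) ⟨x.1, (x.2, w)⟩
    simp only [MCQData.quadOp, MCQData.quadMul, smul_eq_mul] at h1 h2 h3
    rw [show (⟨x.1, x.2⟩ : Σ l, G l) = x from rfl] at h1 h2 h3
    rw [ha] at h1
    rw [hb] at h2
    obtain ⟨rfl, hA⟩ := Sigma.mk.inj_iff.mp h1.symm
    obtain ⟨-, hB⟩ := Sigma.mk.inj_iff.mp h2.symm
    rw [eq_of_heq hA, eq_of_heq hB] at h3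
    simpa using congrArg (fun z => z.2.2) h3
  refine ⟨⟨fun l a b => ⟨hf3u l a b, hf4u l a b⟩, c0ii, c0iii, c0iv⟩,
    c1i, c1ii, c2i, c2ii, c2iii, c2iv, c3i, c3ii, c3iii, ?_, ?_, ?_⟩
  · intro l a b x m a' b' ha hb
    simpa using key4 l a b x m a' b' ha hb 1 0 0
  · intro l a b x m a' b' ha hb
    simpa using key4 l a b x m a' b' ha hb 0 1 0
  · intro l a b x m a' b' ha hb
    simpa using key4 l a b x m a' b' ha hb 0 0 1
end

section
/- Let X = ⨆_{λ∈Λ} G_λ be a multiple conjugation quandle, R a ring, M a left R-module, and let (f₁,f₂,f₃,f₄) and (g₁,g₂,g₃,g₄) be quadruples of maps satisfying conditions (0-i)–(4-iii). If (f₁,f₂,f₃,f₄) ∼ (g₁,g₂,g₃,g₄), then there exists an MCQ isomorphism φ : X̃(f₁,f₂,f₃,f₄) → X̃(g₁,g₂,g₃,g₄) such that pr_X ∘ φ = pr_X, where pr_X : ⨆_{λ∈Λ} (G_λ × M) → X sends (x,u) to x. Concretely, φ(x,u) = (x, h(x)u) works, where h witnesses ∼. -/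
universe u v w x u' v'

/-- if `(f₁,f₂,f₃,f₄) ∼ (g₁,g₂,g₃,g₄)`, then there is an MCQ
isomorphism `φ : X̃(f₁,f₂,f₃,f₄) → X̃(g₁,g₂,g₃,g₄)` commuting with the projections
to `X` (given by `φ(x,u) = (x, h(x)u)`). -/
theorem quadRel_gives_iso {Λ : Type u} {G : Λ → Type v} {R : Type w} [Ring R]
    (D : MCQData Λ G) (hD : D.IsMCQ)
    (f₁ f₂ g₁ g₂ : (Σ l, G l) → (Σ l, G l) → R)
    (f₃ f₄ g₃ g₄ : ∀ l : Λ, G l → G l → R)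
    (hf : MCQData.Conds D f₁ f₂ f₃ f₄) (hg : MCQData.Conds D g₁ g₂ g₃ g₄)
    (M : Type x) [AddCommGroup M] [Module R M]
    (hrel : MCQData.QuadRel D f₁ f₂ g₁ g₂ f₃ f₄ g₃ g₄) :
    ∃ φ : (Σ l, G l × M) → (Σ l, G l × M),
      MCQData.IsMCQHom (MCQData.quadExt D f₁ f₂ f₃ f₄ M)
        (MCQData.quadExt D g₁ g₂ g₃ g₄ M) φ ∧
      Function.Bijective φ ∧
      ∀ z : Σ l, G l × M, (⟨(φ z).1, (φ z).2.1⟩ : Σ l, G l) = ⟨z.1, z.2.1⟩ := by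
  obtain ⟨h, h1, h2, h3, h4⟩ := hrel
  refine ⟨fun z => ⟨z.1, (z.2.1, (h ⟨z.1, z.2.1⟩ : R) • z.2.2)⟩, ⟨?_, ?_⟩, ?_, fun z => rfl⟩
  · intro z w
    show (⟨_, (_, (h _ : R) • _)⟩ : Σ l, G l × M) = _
    simp only [MCQData.quadExt, MCQData.quadOp]
    congr 1
    refine Prod.ext rfl ?_
    show (h (D.op ⟨z.1, z.2.1⟩ ⟨w.1, w.2.1⟩) : R) •
        (f₁ ⟨z.1, z.2.1⟩ ⟨w.1, w.2.1⟩ • z.2.2 + f₂ ⟨z.1, z.2.1⟩ ⟨w.1, w.2.1⟩ • w.2.2) =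
      g₁ ⟨z.1, z.2.1⟩ ⟨w.1, w.2.1⟩ • (h ⟨z.1, z.2.1⟩ : R) • z.2.2 +
        g₂ ⟨z.1, z.2.1⟩ ⟨w.1, w.2.1⟩ • (h ⟨w.1, w.2.1⟩ : R) • w.2.2
    rw [smul_add, smul_smul, smul_smul, smul_smul, smul_smul, h1, h2]
  · intro l a b
    refine ⟨l, (a.1, (h ⟨l, a.1⟩ : R) • a.2), (b.1, (h ⟨l, b.1⟩ : R) • b.2), rfl, rfl, ?_⟩
    show (⟨l, (_, (h ⟨l, D.mul l a.1 b.1⟩ : R) •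
        (f₃ l a.1 b.1 • a.2 + f₄ l a.1 b.1 • b.2))⟩ : Σ l, G l × M) = _
    simp only [MCQData.quadExt, MCQData.quadMul]
    congr 1
    refine Prod.ext rfl ?_
    show (h ⟨l, D.mul l a.1 b.1⟩ : R) • (f₃ l a.1 b.1 • a.2 + f₄ l a.1 b.1 • b.2) =
      g₃ l a.1 b.1 • (h ⟨l, a.1⟩ : R) • a.2 + g₄ l a.1 b.1 • (h ⟨l, b.1⟩ : R) • b.2
    rw [smul_add, smul_smul, smul_smul, smul_smul, smul_smul, h3, h4]
  · refine Function.bijective_iff_has_inverse.2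
      ⟨fun z => ⟨z.1, (z.2.1, ((h ⟨z.1, z.2.1⟩)⁻¹ : Rˣ) • z.2.2)⟩, fun z => ?_, fun z => ?_⟩
    · show (⟨z.1, (z.2.1, ((h ⟨z.1, z.2.1⟩)⁻¹ : Rˣ) • (h ⟨z.1, z.2.1⟩ : R) • z.2.2)⟩ :
        Σ l, G l × M) = z
      rw [← Units.smul_def, smul_smul, inv_mul_cancel, one_smul]
    · show (⟨z.1, (z.2.1, (h ⟨z.1, z.2.1⟩ : R) • ((h ⟨z.1, z.2.1⟩)⁻¹ : Rˣ) • z.2.2)⟩ :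
        Σ l, G l × M) = z
      rw [← Units.smul_def, smul_smul, mul_inv_cancel, one_smul]
end

section
/- Let X = ⨆_{λ∈Λ} G_λ be a multiple conjugation quandle, R a ring, and let f₁, f₂ : X × X → R and f₃, f₄ : ⨆_{λ∈Λ} (G_λ × G_λ) → R satisfy conditions (0-i)–(4-iii). Define g₁, g₂ : X × X → R and g₃, g₄ : ⨆_λ (G_λ × G_λ) → R by g₁(x,y) = f₁(e_x, y), g₂(x,y) = f₃(x ◁ y, x⁻¹ ◁ y) f₂(x,y) f₃(e_y, y), g₃(a,b) = 1, and g₄(a,b) = f₁(e_a, a⁻¹), where e_x denotes the identity of the group component containing x. Then g₁, g₂, g₃, g₄ satisfy conditions (0-i)–(4-iii). -/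
universe u v w x u' v'

/-- if `(f₁,f₂,f₃,f₄)` satisfies conditions (0-i)--(4-iii), then so
does the quadruple `(g₁,g₂,g₃,g₄)` with `g₁(x,y) = f₁(e_x, y)`,
`g₂(x,y) = f₃(x ◁ y, x⁻¹ ◁ y) f₂(x,y) f₃(e_y, y)`, `g₃(a,b) = 1`, and
`g₄(a,b) = f₁(e_a, a⁻¹)`.  Here `g₂` is characterized through the decompositions
`x ◁ y = ⟨m, c⟩` and `x⁻¹ ◁ y = ⟨m, c'⟩` in a common component `G m`. -/
theorem reduced_quadruple_conds {Λ : Type u} {G : Λ → Type v} {R : Type w} [Ring R]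
    (D : MCQData Λ G) (hD : D.IsMCQ)
    (f₁ f₂ : (Σ l, G l) → (Σ l, G l) → R) (f₃ f₄ : ∀ l : Λ, G l → G l → R)
    (hc : MCQData.Conds D f₁ f₂ f₃ f₄)
    (g₂ : (Σ l, G l) → (Σ l, G l) → R)
    (hg₂ : ∀ (l : Λ) (a : G l) (y : Σ l, G l) (m : Λ) (c c' : G m),
      D.op ⟨l, a⟩ y = ⟨m, c⟩ → D.op ⟨l, D.inv l a⟩ y = ⟨m, c'⟩ →
        g₂ ⟨l, a⟩ y = f₃ m c c' * f₂ ⟨l, a⟩ y * f₃ y.1 (D.one y.1) y.2) :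
    MCQData.Conds D (fun x y => f₁ ⟨x.1, D.one x.1⟩ y) g₂
      (fun _ _ _ => (1 : R)) (fun l a _ => f₁ ⟨l, D.one l⟩ ⟨l, D.inv l a⟩) := by
  classical
  obtain ⟨⟨hassoc, hone_mul, hmul_one, hinv_mul, hmul_inv⟩, hconj, hop_one, hop_mul, hdist, hax4⟩ := hD
  obtain ⟨⟨h0i, h0ii, h0iii, h0iv⟩, h1i, h1ii, h2i, h2ii, h2iii, h2iv, h3i, h3ii, h3iii,
    h4i, h4ii, h4iii⟩ := hc
  -- group lemmas
  have sig : ∀ (l : Λ) (a b : G l), (⟨l, a⟩ : Σ l, G l) = ⟨l, b⟩ → a = b := by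
    intro l a b h
    simpa using h
  have inv_unique : ∀ (l : Λ) (a b : G l), D.mul l a b = D.one l → b = D.inv l a := by
    intro l a b h
    calc b = D.mul l (D.mul l (D.inv l a) a) b := by rw [hinv_mul, hone_mul]
      _ = D.mul l (D.inv l a) (D.mul l a b) := by rw [hassoc]
      _ = D.inv l a := by rw [h, hmul_one]
  have inv_inv : ∀ (l : Λ) (a : G l), D.inv l (D.inv l a) = a :=
    fun l a => (inv_unique l _ _ (hinv_mul l a)).symm
  have inv_mul_rev : ∀ (l : Λ) (a b : G l),
      D.inv l (D.mul l a b) = D.mul l (D.inv l b) (D.inv l a) := by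
    intro l a b
    refine (inv_unique l _ _ ?_).symm
    rw [hassoc, ← hassoc l b, hmul_inv, hone_mul, hmul_inv]
  have idem : ∀ (l : Λ) (a : G l), D.mul l a a = a → a = D.one l := by
    intro l a h
    calc a = D.mul l (D.mul l (D.inv l a) a) a := by rw [hinv_mul, hone_mul]
      _ = D.mul l (D.inv l a) (D.mul l a a) := by rw [hassoc]
      _ = D.one l := by rw [h, hinv_mul]
  -- op of identity, and op of inverse
  have op_pair : ∀ (l : Λ) (a : G l) (x : Σ l, G l), ∃ (m : Λ) (a' : G m),
      D.op ⟨l, a⟩ x = ⟨m, a'⟩ ∧ D.op ⟨l, D.inv l a⟩ x = ⟨m, D.inv m a'⟩ ∧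
      D.op ⟨l, D.one l⟩ x = ⟨m, D.one m⟩ := by
    intro l a x
    obtain ⟨m₀, e₁, e₂, k1, k2, k3⟩ := hax4 l (D.one l) (D.one l) x
    rw [hone_mul] at k3
    rw [k1] at k2 k3
    have he1 : e₂ = e₁ := sig _ _ _ k2.symm
    subst he1
    have he : e₂ = D.one m₀ := idem _ _ (sig _ _ _ k3).symm
    subst he
    obtain ⟨m, a', b', j1, j2, j3⟩ := hax4 l a (D.inv l a) x
    rw [hmul_inv, k1] at j3
    have hm : m₀ = m := congrArg Sigma.fst j3
    subst hm
    have hb' := (sig _ _ _ j3).symm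
    have hbinv : b' = D.inv _ a' := inv_unique _ a' b' hb'
    subst hbinv
    exact ⟨_, a', j1, j2, by rw [k1]⟩
  have op_mul_comp : ∀ (l : Λ) (a b : G l) (x : Σ l, G l) (m : Λ) (a' b' : G m),
      D.op ⟨l, a⟩ x = ⟨m, a'⟩ → D.op ⟨l, b⟩ x = ⟨m, b'⟩ →
      D.op ⟨l, D.mul l a b⟩ x = ⟨m, D.mul m a' b'⟩ := by
    intro l a b x m a' b' ha hb
    obtain ⟨m₀, a₀, b₀, j1, j2, j3⟩ := hax4 l a b x
    rw [ha] at j1; rw [hb] at j2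
    have hm : m = m₀ := congrArg Sigma.fst j1
    subst hm
    have ha0 : a' = a₀ := sig _ _ _ j1
    have hb0 : b' = b₀ := sig _ _ _ j2
    rw [j3, ha0, hb0]
  -- the gauge H and its inverse HI
  set HH : (Σ l, G l) → R := fun z => f₃ z.1 z.2 (D.inv z.1 z.2) with hHH
  set HI : (Σ l, G l) → R := fun z => f₃ z.1 (D.one z.1) z.2 with hHI
  have unit_flip : ∀ u v : R, IsUnit u → u * v = 1 → v * u = 1 := by
    intro u v hu huv
    obtain ⟨U, rfl⟩ := hu
    have hv : v = (↑U⁻¹ : R) := by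
      calc v = (↑U⁻¹ : R) * (↑U * v) := by rw [← mul_assoc, U.inv_mul, one_mul]
        _ = (↑U⁻¹ : R) := by rw [huv, mul_one]
    rw [hv, U.inv_mul]
  have h3ee : ∀ l : Λ, f₃ l (D.one l) (D.one l) = 1 := by
    intro l
    have h := h0ii l (D.one l) (D.one l) (D.one l)
    rw [hone_mul] at h
    obtain ⟨U, hU⟩ := (h0i l (D.one l) (D.one l)).1
    have := congrArg (fun r => (↑U⁻¹ : R) * r) h
    simpa [← hU, ← mul_assoc, U.inv_mul] using this
  have hHmI : ∀ z : Σ l, G l, HH z * HI z = 1 := by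
    intro z
    have h := h0ii z.1 (D.one z.1) z.2 (D.inv z.1 z.2)
    rw [hone_mul, hmul_inv, h3ee] at h
    exact h
  have hImH : ∀ z : Σ l, G l, HI z * HH z = 1 :=
    fun z => unit_flip _ _ ((h0i z.1 z.2 (D.inv z.1 z.2)).1) (hHmI z)
  -- the telescoping helper
  have glue : ∀ (u : Σ l, G l) (A p q B : R),
      (A * p * HI u) * (HH u * q * B) = A * (p * q) * B := by
    intro u A p q B
    simp only [mul_assoc]
    rw [← mul_assoc (HI u), hImH, one_mul]
  -- sandwich identities
  have S3 : ∀ (l : Λ) (a b : G l),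
      (1 : R) = HH ⟨l, D.mul l a b⟩ * f₃ l a b * HI ⟨l, a⟩ := by
    intro l a b
    have key : HH ⟨l, D.mul l a b⟩ * f₃ l a b = HH ⟨l, a⟩ := by
      have h := h0ii l a b (D.inv l (D.mul l a b))
      have hb : D.mul l b (D.inv l (D.mul l a b)) = D.inv l a := by
        rw [inv_mul_rev, ← hassoc, hmul_inv, hone_mul]
      rw [hb] at h
      simpa [hHH] using h
    rw [key, hHmI]
  have S4 : ∀ (l : Λ) (a b : G l),
      f₁ ⟨l, D.one l⟩ ⟨l, D.inv l a⟩ = HH ⟨l, D.mul l a b⟩ * f₄ l a b * HI ⟨l, b⟩ := by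
    intro l a b
    have key : HH ⟨l, D.mul l a b⟩ * f₄ l a b
        = f₁ ⟨l, D.one l⟩ ⟨l, D.inv l a⟩ * HH ⟨l, b⟩ := by
      have h := h0iii l a b (D.inv l (D.mul l a b))
      have hb : D.mul l b (D.inv l (D.mul l a b)) = D.inv l a := by
        rw [inv_mul_rev, ← hassoc, hmul_inv, hone_mul]
      rw [hb] at h
      have h2 := h0ii l b (D.inv l b) (D.inv l a)
      rw [hmul_inv] at h2
      rw [inv_mul_rev l a b, ← h2] at h
      have h3 := h1i l (D.one l) (D.inv l a)
      rw [inv_inv, hone_mul] at h3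
      show f₃ l (D.mul l a b) (D.inv l (D.mul l a b)) * f₄ l a b
          = f₁ ⟨l, D.one l⟩ ⟨l, D.inv l a⟩ * f₃ l b (D.inv l b)
      rw [inv_mul_rev l a b, h, h3, mul_assoc]
    rw [key, mul_assoc, hHmI ⟨l, b⟩, mul_one]
  have S1 : ∀ (x y : Σ l, G l),
      f₁ ⟨x.1, D.one x.1⟩ y = HH (D.op x y) * f₁ x y * HI x := by
    intro x y
    obtain ⟨l, a⟩ := x
    obtain ⟨m, a', j1, j2, _⟩ := op_pair l a y
    have h := h4i l a (D.inv l a) y m a' (D.inv m a') j1 j2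
    rw [hmul_inv] at h
    have h' : f₁ ⟨l, D.one l⟩ y * HH ⟨l, a⟩ = HH ⟨m, a'⟩ * f₁ ⟨l, a⟩ y := h
    show f₁ ⟨l, D.one l⟩ y = HH (D.op ⟨l, a⟩ y) * f₁ ⟨l, a⟩ y * HI ⟨l, a⟩
    rw [j1]
    calc f₁ ⟨l, D.one l⟩ y
        = f₁ ⟨l, D.one l⟩ y * (HH ⟨l, a⟩ * HI ⟨l, a⟩) := by rw [hHmI, mul_one]
      _ = HH ⟨m, a'⟩ * f₁ ⟨l, a⟩ y * HI ⟨l, a⟩ := by rw [← mul_assoc, h']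
  have S1' : ∀ (l : Λ) (a : G l) (y : Σ l, G l),
      f₁ ⟨l, D.one l⟩ y = HH (D.op ⟨l, a⟩ y) * f₁ ⟨l, a⟩ y * HI ⟨l, a⟩ :=
    fun l a y => S1 ⟨l, a⟩ y
  have S2 : ∀ (x y : Σ l, G l), g₂ x y = HH (D.op x y) * f₂ x y * HI y := by
    intro x y
    obtain ⟨l, a⟩ := x
    obtain ⟨m, a', j1, j2, _⟩ := op_pair l a y
    rw [hg₂ l a y m a' (D.inv m a') j1 j2, j1]
  refine ⟨⟨?_, ?_, ?_, ?_⟩, ?_, ?_, ?_, ?_, ?_, ?_, ?_, ?_, ?_, ?_, ?_, ?_⟩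
  · -- (0-i)
    intro l a b
    dsimp only
    refine ⟨isUnit_one, ?_⟩
    rw [h1i l (D.one l) (D.inv l a)]
    exact ((h0i _ _ _).2.mul (h0i _ _ _).1)
  · -- (0-ii)
    intro l a b c
    exact one_mul 1
  · -- (0-iii)
    intro l a b c
    rw [one_mul, mul_one]
  · -- (0-iv)
    intro l a b c
    dsimp only
    have h := h2ii ⟨l, D.one l⟩ l (D.inv l b) (D.inv l a)
    rw [hconj, inv_inv, hmul_one, hmul_inv] at h
    rw [inv_mul_rev l a b]
    exact h
  · -- (1-i)
    intro l a b
    dsimp only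
    rw [inv_inv, mul_one]
  · -- (1-ii)
    intro l a b
    dsimp only
    rw [inv_inv l b, one_mul, mul_one]
    have e1 : f₁ ⟨l, D.one l⟩ ⟨l, b⟩
        = HH ⟨l, D.inv l b⟩ * f₄ l (D.inv l b) (D.one l) * HI ⟨l, D.one l⟩ := by
      have h := S4 l (D.inv l b) (D.one l)
      rw [inv_inv, hmul_one] at h
      exact h
    have e2 : (1 : R) = HH ⟨l, D.one l⟩ * f₃ l b (D.inv l b) * HI ⟨l, b⟩ := by
      have h := S3 l b (D.inv l b)
      rw [hmul_inv] at h
      exact h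
    have e3 := S3 l (D.inv l b) (D.mul l a b)
    have hc1 : f₁ ⟨l, D.one l⟩ ⟨l, b⟩
        = HH ⟨l, D.mul l (D.inv l b) (D.mul l a b)⟩ *
          (f₃ l (D.inv l b) (D.mul l a b) * f₄ l (D.inv l b) (D.one l) *
            f₃ l b (D.inv l b)) * HI ⟨l, b⟩ := by
      calc f₁ ⟨l, D.one l⟩ ⟨l, b⟩
          = HH ⟨l, D.inv l b⟩ * f₄ l (D.inv l b) (D.one l) * HI ⟨l, D.one l⟩ := e1
        _ = (HH ⟨l, D.inv l b⟩ * f₄ l (D.inv l b) (D.one l) * HI ⟨l, D.one l⟩) *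
            (HH ⟨l, D.one l⟩ * f₃ l b (D.inv l b) * HI ⟨l, b⟩) := by
              rw [← e2, mul_one]
        _ = HH ⟨l, D.inv l b⟩ * (f₄ l (D.inv l b) (D.one l) * f₃ l b (D.inv l b)) *
            HI ⟨l, b⟩ := glue _ _ _ _ _
        _ = 1 * (HH ⟨l, D.inv l b⟩ * (f₄ l (D.inv l b) (D.one l) * f₃ l b (D.inv l b)) *
            HI ⟨l, b⟩) := (one_mul _).symm
        _ = (HH ⟨l, D.mul l (D.inv l b) (D.mul l a b)⟩ * f₃ l (D.inv l b) (D.mul l a b) *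
            HI ⟨l, D.inv l b⟩) *
            (HH ⟨l, D.inv l b⟩ * (f₄ l (D.inv l b) (D.one l) * f₃ l b (D.inv l b)) *
            HI ⟨l, b⟩) := by rw [← e3]
        _ = HH ⟨l, D.mul l (D.inv l b) (D.mul l a b)⟩ *
            (f₃ l (D.inv l b) (D.mul l a b) * (f₄ l (D.inv l b) (D.one l) *
              f₃ l b (D.inv l b))) * HI ⟨l, b⟩ := glue _ _ _ _ _
        _ = HH ⟨l, D.mul l (D.inv l b) (D.mul l a b)⟩ *
            (f₃ l (D.inv l b) (D.mul l a b) * f₄ l (D.inv l b) (D.one l) *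
              f₃ l b (D.inv l b)) * HI ⟨l, b⟩ := by
              rw [mul_assoc (f₃ l (D.inv l b) (D.mul l a b))]
    have e4 : f₁ ⟨l, D.one l⟩ ⟨l, b⟩
        = HH ⟨l, D.mul l (D.inv l b) (D.mul l a b)⟩ * f₄ l (D.inv l b) (D.mul l a b) *
          HI ⟨l, D.mul l a b⟩ := by
      have h := S4 l (D.inv l b) (D.mul l a b)
      rw [inv_inv] at h
      exact h
    have hc2 : f₁ ⟨l, D.one l⟩ ⟨l, b⟩ * f₁ ⟨l, D.one l⟩ ⟨l, D.inv l a⟩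
        = HH ⟨l, D.mul l (D.inv l b) (D.mul l a b)⟩ *
          (f₄ l (D.inv l b) (D.mul l a b) * f₄ l a b) * HI ⟨l, b⟩ := by
      rw [e4, S4 l a b, glue]
    rw [S2 ⟨l, a⟩ ⟨l, b⟩, hconj, hassoc, h1ii l a b, mul_add, add_mul, mul_neg, neg_mul,
      ← hc1, ← hc2]
  · -- (2-i)
    intro x l
    exact h2i ⟨x.1, D.one x.1⟩ l
  · -- (2-ii)
    intro x l a b
    dsimp only
    rw [S1 x ⟨l, D.mul l a b⟩, S1 (D.op x ⟨l, a⟩) ⟨l, b⟩, S1 x ⟨l, a⟩, glue,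
      hop_mul x l a b, h2ii x l a b]
  · -- (2-iii)
    intro x l a b
    dsimp only
    rw [S2 x ⟨l, D.mul l a b⟩, S1 (D.op x ⟨l, a⟩) ⟨l, b⟩, S2 x ⟨l, a⟩, S3 l a b,
      glue, glue, hop_mul x l a b, h2iii x l a b]
  · -- (2-iv)
    intro x l a b
    dsimp only
    rw [S2 x ⟨l, D.mul l a b⟩, S4 l a b, S2 (D.op x ⟨l, a⟩) ⟨l, b⟩, glue,
      hop_mul x l a b, h2iv x l a b]
  · -- (3-i)
    intro x y z
    dsimp only
    rw [S1 (D.op x y) z, S1 x y, S1 (D.op x z) (D.op y z), S1 x z, glue, glue,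
      hdist x y z, h3i x y z]
  · -- (3-ii)
    intro x y z
    dsimp only
    rw [S1 (D.op x y) z, S2 x y, S2 (D.op x z) (D.op y z), S1 y z, glue, glue,
      hdist x y z, h3ii x y z]
  · -- (3-iii)
    intro x y z
    dsimp only
    rw [S2 (D.op x y) z, S1 (D.op x z) (D.op y z), S2 x z,
      S2 (D.op x z) (D.op y z), S2 y z, hdist x y z, h3iii x y z,
      mul_add, add_mul, glue, glue]
  · -- (4-i)
    intro l a b x m a' b' ha hb
    dsimp only
    rw [one_mul, mul_one]
  · -- (4-ii)
    intro l a b x m a' b' ha hb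
    dsimp only
    have hab := op_mul_comp l a b x m a' b' ha hb
    calc f₁ ⟨l, D.one l⟩ x * f₁ ⟨l, D.one l⟩ ⟨l, D.inv l a⟩
        = (HH (D.op ⟨l, D.mul l a b⟩ x) * f₁ ⟨l, D.mul l a b⟩ x * HI ⟨l, D.mul l a b⟩) *
          (HH ⟨l, D.mul l a b⟩ * f₄ l a b * HI ⟨l, b⟩) := by
            rw [← S1' l (D.mul l a b) x, ← S4 l a b]
      _ = HH (D.op ⟨l, D.mul l a b⟩ x) * (f₁ ⟨l, D.mul l a b⟩ x * f₄ l a b) *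
          HI ⟨l, b⟩ := glue _ _ _ _ _
      _ = HH ⟨m, D.mul m a' b'⟩ * (f₄ m a' b' * f₁ ⟨l, b⟩ x) * HI ⟨l, b⟩ := by
            rw [h4ii l a b x m a' b' ha hb, hab]
      _ = (HH ⟨m, D.mul m a' b'⟩ * f₄ m a' b' * HI ⟨m, b'⟩) *
          (HH ⟨m, b'⟩ * f₁ ⟨l, b⟩ x * HI ⟨l, b⟩) := (glue _ _ _ _ _).symm
      _ = f₁ ⟨m, D.one m⟩ ⟨m, D.inv m a'⟩ * f₁ ⟨l, D.one l⟩ x := by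
            rw [← S4 m a' b', ← hb, ← S1' l b x]
  · -- (4-iii)
    intro l a b x m a' b' ha hb
    dsimp only
    have hab := op_mul_comp l a b x m a' b' ha hb
    calc g₂ ⟨l, D.mul l a b⟩ x
        = HH (D.op ⟨l, D.mul l a b⟩ x) * f₂ ⟨l, D.mul l a b⟩ x * HI x := S2 _ x
      _ = HH ⟨m, D.mul m a' b'⟩ *
          (f₃ m a' b' * f₂ ⟨l, a⟩ x + f₄ m a' b' * f₂ ⟨l, b⟩ x) * HI x := by
            rw [hab, h4iii l a b x m a' b' ha hb]
      _ = HH ⟨m, D.mul m a' b'⟩ * (f₃ m a' b' * f₂ ⟨l, a⟩ x) * HI x +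
          HH ⟨m, D.mul m a' b'⟩ * (f₄ m a' b' * f₂ ⟨l, b⟩ x) * HI x := by
            rw [mul_add, add_mul]
      _ = (HH ⟨m, D.mul m a' b'⟩ * f₃ m a' b' * HI ⟨m, a'⟩) *
          (HH ⟨m, a'⟩ * f₂ ⟨l, a⟩ x * HI x) +
          (HH ⟨m, D.mul m a' b'⟩ * f₄ m a' b' * HI ⟨m, b'⟩) *
          (HH ⟨m, b'⟩ * f₂ ⟨l, b⟩ x * HI x) := by rw [glue, glue]
      _ = 1 * g₂ ⟨l, a⟩ x + f₁ ⟨m, D.one m⟩ ⟨m, D.inv m a'⟩ * g₂ ⟨l, b⟩ x := by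
            rw [← S3 m a' b', ← S4 m a' b', ← ha, ← hb, ← S2 ⟨l, a⟩ x, ← S2 ⟨l, b⟩ x]
end

section
/- Let X = ⨆_{λ∈Λ} G_λ be a multiple conjugation quandle, R a ring, and let f₁, f₂ : X × X → R and f₃, f₄ : ⨆_{λ∈Λ} (G_λ × G_λ) → R satisfy conditions (0-i)–(4-iii). Define g₁, g₂ : X × X → R by g₁(x,y) = f₁(e_x, y) and g₂(x,y) = f₃(x ◁ y, x⁻¹ ◁ y) f₂(x,y) f₃(e_y, y), where e_x denotes the identity of the group component containing x. Then (g₁, g₂) is an MCQ Alexander pair. -/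
universe u v w x u' v'

/-- if `(f₁,f₂,f₃,f₄)` satisfies conditions (0-i)--(4-iii), then the
pair `(g₁, g₂)` with `g₁(x,y) = f₁(e_x, y)` and
`g₂(x,y) = f₃(x ◁ y, x⁻¹ ◁ y) f₂(x,y) f₃(e_y, y)` is an MCQ Alexander pair.
Here `g₂` is characterized through the decompositions `x ◁ y = ⟨m, c⟩` and
`x⁻¹ ◁ y = ⟨m, c'⟩` in a common component `G m`. -/
theorem reduced_pair_is_alexander {Λ : Type u} {G : Λ → Type v} {R : Type w} [Ring R]
    (D : MCQData Λ G) (hD : D.IsMCQ)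
    (f₁ f₂ : (Σ l, G l) → (Σ l, G l) → R) (f₃ f₄ : ∀ l : Λ, G l → G l → R)
    (hc : MCQData.Conds D f₁ f₂ f₃ f₄)
    (g₂ : (Σ l, G l) → (Σ l, G l) → R)
    (hg₂ : ∀ (l : Λ) (a : G l) (y : Σ l, G l) (m : Λ) (c c' : G m),
      D.op ⟨l, a⟩ y = ⟨m, c⟩ → D.op ⟨l, D.inv l a⟩ y = ⟨m, c'⟩ →
        g₂ ⟨l, a⟩ y = f₃ m c c' * f₂ ⟨l, a⟩ y * f₃ y.1 (D.one y.1) y.2) :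
    D.IsMCQAlexanderPair (fun x y => f₁ ⟨x.1, D.one x.1⟩ y) g₂ := by
  obtain ⟨⟨hassoc, honemul, hmulone, hinvmul, hmulinv⟩, hconj, hopone, hopmul, hdist, hcomm⟩ := hD
  obtain ⟨⟨h0i, h0ii, h0iii, h0iv⟩, h1i, h1ii, h2i, h2ii, h2iii, h2iv,
    h3i, h3ii, h3iii, h4i, h4ii, h4iii⟩ := hc
  letI instM : ∀ l, Mul (G l) := fun l => ⟨D.mul l⟩
  letI instO : ∀ l, One (G l) := fun l => ⟨D.one l⟩
  letI instI : ∀ l, Inv (G l) := fun l => ⟨D.inv l⟩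
  letI instG : ∀ l, Group (G l) := fun l =>
    Group.ofLeftAxioms (hassoc l) (honemul l) (hinvmul l)
  -- restatements in `*`/`1`/`⁻¹` form (all definally equal)
  have Hconj : ∀ (l : Λ) (a b : G l), D.op ⟨l, a⟩ ⟨l, b⟩ = ⟨l, b⁻¹ * a * b⟩ := hconj
  have Hopmul : ∀ (x : Σ l, G l) (l : Λ) (a b : G l),
      D.op x ⟨l, a * b⟩ = D.op (D.op x ⟨l, a⟩) ⟨l, b⟩ := hopmul
  have Hcomm : ∀ (l : Λ) (a b : G l) (x : Σ l, G l), ∃ (m : Λ) (a' b' : G m),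
      D.op ⟨l, a⟩ x = ⟨m, a'⟩ ∧ D.op ⟨l, b⟩ x = ⟨m, b'⟩ ∧
      D.op ⟨l, a * b⟩ x = ⟨m, a' * b'⟩ := hcomm
  have H0ii : ∀ (l : Λ) (a b c : G l),
      f₃ l (a * b) c * f₃ l a b = f₃ l a (b * c) := h0ii
  have H0iii : ∀ (l : Λ) (a b c : G l),
      f₃ l (a * b) c * f₄ l a b = f₄ l a (b * c) * f₃ l b c := h0iii
  have H0iv : ∀ (l : Λ) (a b c : G l),
      f₄ l (a * b) c = f₄ l a (b * c) * f₄ l b c := h0iv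
  have H1i : ∀ (l : Λ) (a b : G l),
      f₁ ⟨l, a⟩ ⟨l, b⟩ = f₄ l b⁻¹ (a * b) * f₃ l a b := h1i
  have H1ii : ∀ (l : Λ) (a b : G l),
      f₂ ⟨l, a⟩ ⟨l, b⟩ =
        -(f₃ l b⁻¹ (a * b) * f₄ l b⁻¹ 1 * f₃ l b b⁻¹) +
          f₄ l b⁻¹ (a * b) * f₄ l a b := h1ii
  have H2ii : ∀ (x : Σ l, G l) (l : Λ) (a b : G l),
      f₁ x ⟨l, a * b⟩ = f₁ (D.op x ⟨l, a⟩) ⟨l, b⟩ * f₁ x ⟨l, a⟩ := h2ii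
  have H2iii : ∀ (x : Σ l, G l) (l : Λ) (a b : G l),
      f₂ x ⟨l, a * b⟩ * f₃ l a b = f₁ (D.op x ⟨l, a⟩) ⟨l, b⟩ * f₂ x ⟨l, a⟩ := h2iii
  have H4i : ∀ (l : Λ) (a b : G l) (x : Σ l, G l) (m : Λ) (a' b' : G m),
      D.op ⟨l, a⟩ x = ⟨m, a'⟩ → D.op ⟨l, b⟩ x = ⟨m, b'⟩ →
        f₁ ⟨l, a * b⟩ x * f₃ l a b = f₃ m a' b' * f₁ ⟨l, a⟩ x := h4i
  have H4iii : ∀ (l : Λ) (a b : G l) (x : Σ l, G l) (m : Λ) (a' b' : G m),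
      D.op ⟨l, a⟩ x = ⟨m, a'⟩ → D.op ⟨l, b⟩ x = ⟨m, b'⟩ →
        f₂ ⟨l, a * b⟩ x = f₃ m a' b' * f₂ ⟨l, a⟩ x + f₄ m a' b' * f₂ ⟨l, b⟩ x := h4iii
  -- sigma injectivity helper
  have inj : ∀ {m : Λ} {c c' : G m}, (⟨m, c⟩ : Σ l, G l) = ⟨m, c'⟩ → c = c' := by
    intro m c c' h
    exact sigma_mk_injective h
  -- the identity maps to the identity of the target component
  have L_e : ∀ (l : Λ) (u : G l) (y : Σ l, G l),
      D.op ⟨l, (1 : G l)⟩ y = ⟨(D.op ⟨l, u⟩ y).1, 1⟩ := by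
    intro l u y
    obtain ⟨m, p, v, hp, hv, hpv⟩ := Hcomm l 1 u y
    rw [one_mul] at hpv
    have h1 : (⟨m, v⟩ : Σ l, G l) = ⟨m, p * v⟩ := hv.symm.trans hpv
    have hp1 : p = 1 := right_eq_mul.mp (inj h1)
    rw [hp1] at hp
    rw [hv]
    exact hp
  -- inverses map to inverses
  have L_inv : ∀ (l : Λ) (a : G l) (y : Σ l, G l) (m : Λ) (c : G m),
      D.op ⟨l, a⟩ y = ⟨m, c⟩ → D.op ⟨l, a⁻¹⟩ y = ⟨m, c⁻¹⟩ := by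
    intro l a y m c h
    obtain ⟨m₀, u, v, hu, hv, huv⟩ := Hcomm l a a⁻¹ y
    rw [h] at hu
    have hm : m = m₀ := congrArg Sigma.fst hu
    subst hm
    obtain rfl : c = u := inj hu
    rw [mul_inv_cancel] at huv
    have he := L_e l a y
    rw [h] at he
    have h1 : (⟨m, c * v⟩ : Σ l, G l) = ⟨m, 1⟩ := huv.symm.trans he
    obtain rfl : v = c⁻¹ := (inv_eq_of_mul_eq_one_right (inj h1)).symm
    exact hv
  -- f₃ normalizations
  have R1 : ∀ (l : Λ) (a : G l), f₃ l a 1 = 1 := by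
    intro l a
    have h := H0ii l a 1 1
    rw [mul_one, one_mul] at h
    exact (h0i l a 1).1.mul_left_cancel (by rw [h, mul_one])
  have R3 : ∀ (l : Λ) (a : G l), f₃ l a a⁻¹ * f₃ l 1 a = 1 := by
    intro l a
    have h := H0ii l 1 a a⁻¹
    rw [one_mul, mul_inv_cancel] at h
    rw [h, R1]
  have R4 : ∀ (l : Λ) (a : G l), f₃ l 1 a * f₃ l a a⁻¹ = 1 := by
    intro l a
    have h := H0ii l a a⁻¹ a
    rw [mul_inv_cancel, inv_mul_cancel] at h
    rw [h, R1]
  -- the gauge identities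
  have LG1' : ∀ (ly : Λ) (ay : G ly) (z : Σ l, G l) (m : Λ) (c : G m),
      D.op ⟨ly, ay⟩ z = ⟨m, c⟩ →
        f₁ ⟨ly, ay⟩ z * f₃ ly 1 ay = f₃ m 1 c * f₁ ⟨ly, 1⟩ z := by
    intro ly ay z m c h
    have he := L_e ly ay z
    rw [h] at he
    have he' : D.op ⟨ly, (1 : G ly)⟩ z = ⟨m, 1⟩ := he
    have key := H4i ly 1 ay z m 1 c he' h
    rwa [one_mul] at key
  have LG1 : ∀ (lx : Λ) (ax : G lx) (y : Σ l, G l) (m : Λ) (c : G m),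
      D.op ⟨lx, ax⟩ y = ⟨m, c⟩ →
        f₃ m c c⁻¹ * f₁ ⟨lx, ax⟩ y = f₁ ⟨lx, 1⟩ y * f₃ lx ax ax⁻¹ := by
    intro lx ax y m c h
    have E := LG1' lx ax y m c h
    calc f₃ m c c⁻¹ * f₁ ⟨lx, ax⟩ y
        = f₃ m c c⁻¹ * (f₁ ⟨lx, ax⟩ y * f₃ lx 1 ax * f₃ lx ax ax⁻¹) := by
          rw [mul_assoc (f₁ ⟨lx, ax⟩ y) (f₃ lx 1 ax), R4 lx ax, mul_one]
      _ = f₃ m c c⁻¹ * (f₃ m 1 c * f₁ ⟨lx, 1⟩ y * f₃ lx ax ax⁻¹) := by rw [E]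
      _ = (f₃ m c c⁻¹ * f₃ m 1 c) * (f₁ ⟨lx, 1⟩ y * f₃ lx ax ax⁻¹) := by noncomm_ring
      _ = f₁ ⟨lx, 1⟩ y * f₃ lx ax ax⁻¹ := by rw [R3 m c, one_mul]
  -- the closed formula for g₂
  have hG2 : ∀ (x : Σ l, G l) (ly : Λ) (ay : G ly) (m : Λ) (c : G m),
      D.op x ⟨ly, ay⟩ = ⟨m, c⟩ →
        g₂ x ⟨ly, ay⟩ = f₃ m c c⁻¹ * f₂ x ⟨ly, ay⟩ * f₃ ly 1 ay := by
    intro x ly ay m c h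
    obtain ⟨lx, ax⟩ := x
    obtain ⟨m₀, u, v, hu, hv, huv⟩ := Hcomm lx ax ax⁻¹ ⟨ly, ay⟩
    rw [h] at hu
    have hm : m = m₀ := congrArg Sigma.fst hu
    subst hm
    obtain rfl : c = u := inj hu
    rw [mul_inv_cancel] at huv
    have he := L_e lx ax ⟨ly, ay⟩
    rw [h] at he
    have h1 : (⟨m, c * v⟩ : Σ l, G l) = ⟨m, 1⟩ := huv.symm.trans he
    obtain rfl : v = c⁻¹ := (inv_eq_of_mul_eq_one_right (inj h1)).symm
    exact hg₂ lx ax ⟨ly, ay⟩ m c c⁻¹ h hv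
  refine ⟨?_, ?_, ?_, ?_, ?_, ?_, ?_, ?_, ?_⟩
  · -- condition (i)
    intro l a b
    have hopc : D.op ⟨l, a⟩ ⟨l, b⟩ = ⟨l, b⁻¹ * a * b⟩ := Hconj l a b
    have hg := hG2 ⟨l, a⟩ l b l (b⁻¹ * a * b) hopc
    have e1b : f₁ ⟨l, (1 : G l)⟩ ⟨l, b⟩ = f₄ l b⁻¹ b * f₃ l 1 b := by
      have h := H1i l 1 b
      rwa [one_mul] at h
    have e1ab : f₁ ⟨l, (1 : G l)⟩ ⟨l, a⁻¹ * b⟩ =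
        f₄ l (b⁻¹ * a) (a⁻¹ * b) * f₃ l 1 (a⁻¹ * b) := by
      have h := H1i l 1 (a⁻¹ * b)
      rwa [one_mul, show (a⁻¹ * b)⁻¹ = b⁻¹ * a by group] at h
    have SI1 : f₃ l (b⁻¹ * a * b) (b⁻¹ * a * b)⁻¹ *
        (f₃ l b⁻¹ (a * b) * f₄ l b⁻¹ 1 * f₃ l b b⁻¹) * f₃ l 1 b =
        f₄ l b⁻¹ b * f₃ l 1 b := by
      have s1 := H0ii l b⁻¹ (a * b) (b⁻¹ * a * b)⁻¹
      rw [show b⁻¹ * (a * b) = b⁻¹ * a * b by group,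
        show (a * b) * (b⁻¹ * a * b)⁻¹ = b by group] at s1
      have s3 := H0iii l b⁻¹ 1 b
      rw [mul_one, one_mul] at s3
      calc f₃ l (b⁻¹ * a * b) (b⁻¹ * a * b)⁻¹ *
            (f₃ l b⁻¹ (a * b) * f₄ l b⁻¹ 1 * f₃ l b b⁻¹) * f₃ l 1 b
          = (f₃ l (b⁻¹ * a * b) (b⁻¹ * a * b)⁻¹ * f₃ l b⁻¹ (a * b)) * f₄ l b⁻¹ 1 *
              (f₃ l b b⁻¹ * f₃ l 1 b) := by noncomm_ring
        _ = f₃ l b⁻¹ b * f₄ l b⁻¹ 1 * 1 := by rw [s1, R3 l b]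
        _ = f₄ l b⁻¹ b * f₃ l 1 b := by rw [mul_one, s3]
    have SI2 : f₃ l (b⁻¹ * a * b) (b⁻¹ * a * b)⁻¹ *
        (f₄ l b⁻¹ (a * b) * f₄ l a b) * f₃ l 1 b =
        f₄ l (b⁻¹ * a) (a⁻¹ * b) * f₃ l 1 (a⁻¹ * b) := by
      have t1 := H0iii l b⁻¹ (a * b) (b⁻¹ * a * b)⁻¹
      rw [show b⁻¹ * (a * b) = b⁻¹ * a * b by group,
        show (a * b) * (b⁻¹ * a * b)⁻¹ = b by group] at t1
      have t2 := H0iii l a b (b⁻¹ * a * b)⁻¹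
      rw [show b * (b⁻¹ * a * b)⁻¹ = a⁻¹ * b by group] at t2
      have t3 := H0ii l 1 b (b⁻¹ * a * b)⁻¹
      rw [one_mul, show b * (b⁻¹ * a * b)⁻¹ = a⁻¹ * b by group] at t3
      have t4 := H0iv l b⁻¹ a (a⁻¹ * b)
      rw [show a * (a⁻¹ * b) = b by group] at t4
      calc f₃ l (b⁻¹ * a * b) (b⁻¹ * a * b)⁻¹ *
            (f₄ l b⁻¹ (a * b) * f₄ l a b) * f₃ l 1 b
          = (f₃ l (b⁻¹ * a * b) (b⁻¹ * a * b)⁻¹ * f₄ l b⁻¹ (a * b)) * f₄ l a b *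
              f₃ l 1 b := by noncomm_ring
        _ = (f₄ l b⁻¹ b * f₃ l (a * b) (b⁻¹ * a * b)⁻¹) * f₄ l a b * f₃ l 1 b := by
            rw [t1]
        _ = f₄ l b⁻¹ b * ((f₃ l (a * b) (b⁻¹ * a * b)⁻¹ * f₄ l a b) * f₃ l 1 b) := by
            noncomm_ring
        _ = f₄ l b⁻¹ b * ((f₄ l a (a⁻¹ * b) * f₃ l b (b⁻¹ * a * b)⁻¹) * f₃ l 1 b) := by
            rw [t2]
        _ = f₄ l b⁻¹ b * (f₄ l a (a⁻¹ * b) * (f₃ l b (b⁻¹ * a * b)⁻¹ * f₃ l 1 b)) := by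
            noncomm_ring
        _ = f₄ l b⁻¹ b * (f₄ l a (a⁻¹ * b) * f₃ l 1 (a⁻¹ * b)) := by rw [t3]
        _ = (f₄ l b⁻¹ b * f₄ l a (a⁻¹ * b)) * f₃ l 1 (a⁻¹ * b) := by noncomm_ring
        _ = f₄ l (b⁻¹ * a) (a⁻¹ * b) * f₃ l 1 (a⁻¹ * b) := by rw [t4]
    show f₁ ⟨l, (1 : G l)⟩ ⟨l, b⟩ + g₂ ⟨l, a⟩ ⟨l, b⟩ = f₁ ⟨l, (1 : G l)⟩ ⟨l, a⁻¹ * b⟩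
    rw [hg, H1ii l a b, e1b, e1ab]
    calc f₄ l b⁻¹ b * f₃ l 1 b +
          f₃ l (b⁻¹ * a * b) (b⁻¹ * a * b)⁻¹ *
            (-(f₃ l b⁻¹ (a * b) * f₄ l b⁻¹ 1 * f₃ l b b⁻¹) +
              f₄ l b⁻¹ (a * b) * f₄ l a b) * f₃ l 1 b
        = f₄ l b⁻¹ b * f₃ l 1 b +
            (-(f₃ l (b⁻¹ * a * b) (b⁻¹ * a * b)⁻¹ *
                (f₃ l b⁻¹ (a * b) * f₄ l b⁻¹ 1 * f₃ l b b⁻¹) * f₃ l 1 b) +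
              f₃ l (b⁻¹ * a * b) (b⁻¹ * a * b)⁻¹ *
                (f₄ l b⁻¹ (a * b) * f₄ l a b) * f₃ l 1 b) := by noncomm_ring
      _ = f₄ l b⁻¹ b * f₃ l 1 b +
            (-(f₄ l b⁻¹ b * f₃ l 1 b) +
              f₄ l (b⁻¹ * a) (a⁻¹ * b) * f₃ l 1 (a⁻¹ * b)) := by rw [SI1, SI2]
      _ = f₄ l (b⁻¹ * a) (a⁻¹ * b) * f₃ l 1 (a⁻¹ * b) := by abel
  · -- condition (ii)
    intro l a b x
    rfl
  · -- condition (iii)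
    intro l a b x
    obtain ⟨lx, ax⟩ := x
    obtain ⟨m, a', b', ha, hb, hab⟩ := Hcomm l a b ⟨lx, ax⟩
    have hia := L_inv l a ⟨lx, ax⟩ m a' ha
    have ef1 : f₁ ⟨m, (1 : G m)⟩ ⟨m, a'⁻¹⟩ = f₄ m a' a'⁻¹ * f₃ m 1 a'⁻¹ := by
      have h := H1i m 1 a'⁻¹
      rwa [one_mul, inv_inv] at h
    have J1 : f₃ m (a' * b') (a' * b')⁻¹ * f₃ m a' b' = f₃ m a' a'⁻¹ := by
      have h := H0ii m a' b' (a' * b')⁻¹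
      rwa [show b' * (a' * b')⁻¹ = a'⁻¹ by group] at h
    have J2 : f₃ m (a' * b') (a' * b')⁻¹ * f₄ m a' b' =
        f₄ m a' a'⁻¹ * (f₃ m 1 a'⁻¹ * f₃ m b' b'⁻¹) := by
      have t1 := H0iii m a' b' (a' * b')⁻¹
      rw [show b' * (a' * b')⁻¹ = a'⁻¹ by group] at t1
      have t2 := H0ii m b' b'⁻¹ a'⁻¹
      rw [mul_inv_cancel] at t2
      rw [t1, show (a' * b')⁻¹ = b'⁻¹ * a'⁻¹ from mul_inv_rev a' b', ← t2]
    show g₂ ⟨l, a * b⟩ ⟨lx, ax⟩ = g₂ ⟨l, a⟩ ⟨lx, ax⟩ +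
      f₁ ⟨(D.op ⟨l, b⟩ ⟨lx, ax⟩).1, 1⟩ (D.op ⟨l, a⁻¹⟩ ⟨lx, ax⟩) * g₂ ⟨l, b⟩ ⟨lx, ax⟩
    rw [hb, hia]
    show g₂ ⟨l, a * b⟩ ⟨lx, ax⟩ = g₂ ⟨l, a⟩ ⟨lx, ax⟩ +
      f₁ ⟨m, (1 : G m)⟩ ⟨m, a'⁻¹⟩ * g₂ ⟨l, b⟩ ⟨lx, ax⟩
    rw [hG2 ⟨l, a * b⟩ lx ax m (a' * b') hab, hG2 ⟨l, a⟩ lx ax m a' ha,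
      hG2 ⟨l, b⟩ lx ax m b' hb, ef1, H4iii l a b ⟨lx, ax⟩ m a' b' ha hb]
    calc f₃ m (a' * b') (a' * b')⁻¹ *
          (f₃ m a' b' * f₂ ⟨l, a⟩ ⟨lx, ax⟩ + f₄ m a' b' * f₂ ⟨l, b⟩ ⟨lx, ax⟩) *
          f₃ lx 1 ax
        = (f₃ m (a' * b') (a' * b')⁻¹ * f₃ m a' b') *
            (f₂ ⟨l, a⟩ ⟨lx, ax⟩ * f₃ lx 1 ax) +
          (f₃ m (a' * b') (a' * b')⁻¹ * f₄ m a' b') *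
            (f₂ ⟨l, b⟩ ⟨lx, ax⟩ * f₃ lx 1 ax) := by noncomm_ring
      _ = f₃ m a' a'⁻¹ * (f₂ ⟨l, a⟩ ⟨lx, ax⟩ * f₃ lx 1 ax) +
          (f₄ m a' a'⁻¹ * (f₃ m 1 a'⁻¹ * f₃ m b' b'⁻¹)) *
            (f₂ ⟨l, b⟩ ⟨lx, ax⟩ * f₃ lx 1 ax) := by rw [J1, J2]
      _ = f₃ m a' a'⁻¹ * f₂ ⟨l, a⟩ ⟨lx, ax⟩ * f₃ lx 1 ax +
          f₄ m a' a'⁻¹ * f₃ m 1 a'⁻¹ *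
            (f₃ m b' b'⁻¹ * f₂ ⟨l, b⟩ ⟨lx, ax⟩ * f₃ lx 1 ax) := by noncomm_ring
  · -- condition (iv)
    intro x l
    exact h2i ⟨x.1, D.one x.1⟩ l
  · -- condition (v)
    intro x l a b
    obtain ⟨lx, ax⟩ := x
    have he := L_e lx ax ⟨l, a⟩
    have h := H2ii ⟨lx, (1 : G lx)⟩ l a b
    rw [he] at h
    exact h
  · -- condition (vi)
    intro x l a b
    show g₂ x ⟨l, a * b⟩ = f₁ ⟨(D.op x ⟨l, a⟩).1, 1⟩ ⟨l, b⟩ * g₂ x ⟨l, a⟩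
    rcases hy : D.op x ⟨l, a⟩ with ⟨m, c⟩
    rcases hz : D.op x ⟨l, a * b⟩ with ⟨n, d⟩
    have hq : D.op ⟨m, c⟩ ⟨l, b⟩ = ⟨n, d⟩ := by
      rw [← hy, ← Hopmul]
      exact hz
    show g₂ x ⟨l, a * b⟩ = f₁ ⟨m, (1 : G m)⟩ ⟨l, b⟩ * g₂ x ⟨l, a⟩
    have K := LG1 m c ⟨l, b⟩ n d hq
    have h23 := H2iii x l a b
    rw [hy] at h23
    have f3m : f₃ l a b * f₃ l 1 a = f₃ l 1 (a * b) := by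
      have h := H0ii l 1 a b
      rwa [one_mul] at h
    calc g₂ x ⟨l, a * b⟩
        = f₃ n d d⁻¹ * f₂ x ⟨l, a * b⟩ * f₃ l 1 (a * b) := hG2 x l (a * b) n d hz
      _ = f₃ n d d⁻¹ * (f₂ x ⟨l, a * b⟩ * f₃ l a b) * f₃ l 1 a := by
          rw [← f3m]; noncomm_ring
      _ = f₃ n d d⁻¹ * (f₁ ⟨m, c⟩ ⟨l, b⟩ * f₂ x ⟨l, a⟩) * f₃ l 1 a := by rw [h23]
      _ = (f₃ n d d⁻¹ * f₁ ⟨m, c⟩ ⟨l, b⟩) * (f₂ x ⟨l, a⟩ * f₃ l 1 a) := by noncomm_ring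
      _ = (f₁ ⟨m, (1 : G m)⟩ ⟨l, b⟩ * f₃ m c c⁻¹) * (f₂ x ⟨l, a⟩ * f₃ l 1 a) := by
          rw [K]
      _ = f₁ ⟨m, (1 : G m)⟩ ⟨l, b⟩ * (f₃ m c c⁻¹ * f₂ x ⟨l, a⟩ * f₃ l 1 a) := by
          noncomm_ring
      _ = f₁ ⟨m, (1 : G m)⟩ ⟨l, b⟩ * g₂ x ⟨l, a⟩ := by rw [hG2 x l a m c hy]
  · -- condition (vii)
    intro x y z
    obtain ⟨lx, ax⟩ := x
    have hey := L_e lx ax y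
    have hez := L_e lx ax z
    have h := h3i ⟨lx, (1 : G lx)⟩ y z
    rw [hey, hez] at h
    exact h
  · -- condition (viii)
    intro x y z
    obtain ⟨lx, ax⟩ := x
    obtain ⟨ly, ay⟩ := y
    rcases ep : D.op ⟨lx, ax⟩ ⟨ly, ay⟩ with ⟨mp, p⟩
    rcases eu : D.op ⟨lx, ax⟩ z with ⟨mu, u⟩
    rcases ev : D.op ⟨ly, ay⟩ z with ⟨mv, v⟩
    rcases eq2 : D.op ⟨mp, p⟩ z with ⟨mq, q⟩
    have hq2 : D.op ⟨mu, u⟩ ⟨mv, v⟩ = ⟨mq, q⟩ := by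
      rw [← eu, ← ev, ← hdist, ep]
      exact eq2
    show f₁ ⟨mp, (1 : G mp)⟩ z * g₂ ⟨lx, ax⟩ ⟨ly, ay⟩ =
      g₂ ⟨mu, u⟩ ⟨mv, v⟩ * f₁ ⟨ly, (1 : G ly)⟩ z
    have K := LG1 mp p z mq q eq2
    have h32 := h3ii ⟨lx, ax⟩ ⟨ly, ay⟩ z
    rw [ep, eu, ev] at h32
    have E := LG1' ly ay z mv v ev
    calc f₁ ⟨mp, (1 : G mp)⟩ z * g₂ ⟨lx, ax⟩ ⟨ly, ay⟩
        = f₁ ⟨mp, (1 : G mp)⟩ z *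
            (f₃ mp p p⁻¹ * f₂ ⟨lx, ax⟩ ⟨ly, ay⟩ * f₃ ly 1 ay) := by
          rw [hG2 ⟨lx, ax⟩ ly ay mp p ep]
      _ = (f₁ ⟨mp, (1 : G mp)⟩ z * f₃ mp p p⁻¹) * f₂ ⟨lx, ax⟩ ⟨ly, ay⟩ *
            f₃ ly 1 ay := by noncomm_ring
      _ = (f₃ mq q q⁻¹ * f₁ ⟨mp, p⟩ z) * f₂ ⟨lx, ax⟩ ⟨ly, ay⟩ * f₃ ly 1 ay := by
          rw [K]
      _ = f₃ mq q q⁻¹ * (f₁ ⟨mp, p⟩ z * f₂ ⟨lx, ax⟩ ⟨ly, ay⟩) * f₃ ly 1 ay := by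
          noncomm_ring
      _ = f₃ mq q q⁻¹ * (f₂ ⟨mu, u⟩ ⟨mv, v⟩ * f₁ ⟨ly, ay⟩ z) * f₃ ly 1 ay := by
          rw [h32]
      _ = f₃ mq q q⁻¹ * f₂ ⟨mu, u⟩ ⟨mv, v⟩ * (f₁ ⟨ly, ay⟩ z * f₃ ly 1 ay) := by
          noncomm_ring
      _ = f₃ mq q q⁻¹ * f₂ ⟨mu, u⟩ ⟨mv, v⟩ * (f₃ mv 1 v * f₁ ⟨ly, 1⟩ z) := by
          rw [E]
      _ = (f₃ mq q q⁻¹ * f₂ ⟨mu, u⟩ ⟨mv, v⟩ * f₃ mv 1 v) * f₁ ⟨ly, (1 : G ly)⟩ z := by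
          noncomm_ring
      _ = g₂ ⟨mu, u⟩ ⟨mv, v⟩ * f₁ ⟨ly, (1 : G ly)⟩ z := by
          rw [hG2 ⟨mu, u⟩ mv v mq q hq2]
  · -- condition (ix)
    intro x y z
    obtain ⟨lx, ax⟩ := x
    obtain ⟨ly, ay⟩ := y
    obtain ⟨lz, az⟩ := z
    rcases ep : D.op ⟨lx, ax⟩ ⟨ly, ay⟩ with ⟨mp, p⟩
    rcases eu : D.op ⟨lx, ax⟩ ⟨lz, az⟩ with ⟨mu, u⟩
    rcases ev : D.op ⟨ly, ay⟩ ⟨lz, az⟩ with ⟨mv, v⟩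
    rcases eq2 : D.op ⟨mp, p⟩ ⟨lz, az⟩ with ⟨mq, q⟩
    have hq2 : D.op ⟨mu, u⟩ ⟨mv, v⟩ = ⟨mq, q⟩ := by
      rw [← eu, ← ev, ← hdist, ep]
      exact eq2
    show g₂ ⟨mp, p⟩ ⟨lz, az⟩ =
      f₁ ⟨mu, (1 : G mu)⟩ ⟨mv, v⟩ * g₂ ⟨lx, ax⟩ ⟨lz, az⟩ +
        g₂ ⟨mu, u⟩ ⟨mv, v⟩ * g₂ ⟨ly, ay⟩ ⟨lz, az⟩
    have K := LG1 mu u ⟨mv, v⟩ mq q hq2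
    have h33 := h3iii ⟨lx, ax⟩ ⟨ly, ay⟩ ⟨lz, az⟩
    rw [ep, eu, ev] at h33
    have R4v := R4 mv v
    rw [hG2 ⟨mp, p⟩ lz az mq q eq2, h33, hG2 ⟨lx, ax⟩ lz az mu u eu,
      hG2 ⟨ly, ay⟩ lz az mv v ev, hG2 ⟨mu, u⟩ mv v mq q hq2]
    calc f₃ mq q q⁻¹ *
          (f₁ ⟨mu, u⟩ ⟨mv, v⟩ * f₂ ⟨lx, ax⟩ ⟨lz, az⟩ +
            f₂ ⟨mu, u⟩ ⟨mv, v⟩ * f₂ ⟨ly, ay⟩ ⟨lz, az⟩) * f₃ lz 1 az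
        = (f₃ mq q q⁻¹ * f₁ ⟨mu, u⟩ ⟨mv, v⟩) *
            (f₂ ⟨lx, ax⟩ ⟨lz, az⟩ * f₃ lz 1 az) +
          (f₃ mq q q⁻¹ * f₂ ⟨mu, u⟩ ⟨mv, v⟩) *
            ((1 : R) * (f₂ ⟨ly, ay⟩ ⟨lz, az⟩ * f₃ lz 1 az)) := by noncomm_ring
      _ = (f₁ ⟨mu, (1 : G mu)⟩ ⟨mv, v⟩ * f₃ mu u u⁻¹) *
            (f₂ ⟨lx, ax⟩ ⟨lz, az⟩ * f₃ lz 1 az) +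
          (f₃ mq q q⁻¹ * f₂ ⟨mu, u⟩ ⟨mv, v⟩) *
            ((f₃ mv 1 v * f₃ mv v v⁻¹) *
              (f₂ ⟨ly, ay⟩ ⟨lz, az⟩ * f₃ lz 1 az)) := by rw [K, R4v]
      _ = f₁ ⟨mu, (1 : G mu)⟩ ⟨mv, v⟩ *
            (f₃ mu u u⁻¹ * f₂ ⟨lx, ax⟩ ⟨lz, az⟩ * f₃ lz 1 az) +
          f₃ mq q q⁻¹ * f₂ ⟨mu, u⟩ ⟨mv, v⟩ * f₃ mv 1 v *
            (f₃ mv v v⁻¹ * f₂ ⟨ly, ay⟩ ⟨lz, az⟩ * f₃ lz 1 az) := by noncomm_ring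
end

section
/- Let X = ⨆_{λ∈Λ} G_λ be a multiple conjugation quandle, R a ring, and M a left R-module. For any quadruple (f₁,f₂,f₃,f₄) of maps f₁, f₂ : X × X → R, f₃, f₄ : ⨆_λ (G_λ × G_λ) → R satisfying conditions (0-i)–(4-iii), there exists an MCQ Alexander pair (g₁, g₂) of maps g₁, g₂ : X × X → R such that the MCQ X̃(f₁,f₂,f₃,f₄) is MCQ-isomorphic to the MCQ X̃(g₁,g₂). (One may take g₁(x,y) = f₁(e_x, y) and g₂(x,y) = f₃(x ◁ y, x⁻¹ ◁ y) f₂(x,y) f₃(e_y, y), with the isomorphism induced by h(x) = f₃(x, x⁻¹).) -/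
universe u v w x u' v'

/-- Auxiliary: the gauge transform of `f` by `H` (using the first argument). -/
def MCQgOne {Λ : Type u} {G : Λ → Type v} {R : Type w} [Ring R] (D : MCQData Λ G)
    (f : (Σ l, G l) → (Σ l, G l) → R) (H : (Σ l, G l) → Rˣ) :
    (Σ l, G l) → (Σ l, G l) → R :=
  fun x y => ((H (D.op x y) : Rˣ) : R) * f x y * (((H x)⁻¹ : Rˣ) : R)

/-- Auxiliary: the gauge transform of `f` by `H` (using the second argument). -/
def MCQgTwo {Λ : Type u} {G : Λ → Type v} {R : Type w} [Ring R] (D : MCQData Λ G)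
    (f : (Σ l, G l) → (Σ l, G l) → R) (H : (Σ l, G l) → Rˣ) :
    (Σ l, G l) → (Σ l, G l) → R :=
  fun x y => ((H (D.op x y) : Rˣ) : R) * f x y * (((H y)⁻¹ : Rˣ) : R)

/-- every linear extension of an MCQ is realized by an MCQ Alexander
pair: for any quadruple `(f₁,f₂,f₃,f₄)` satisfying conditions (0-i)--(4-iii), there
is an MCQ Alexander pair `(g₁, g₂)` such that `X̃(f₁,f₂,f₃,f₄)` is MCQ-isomorphic
to `X̃(g₁,g₂)`. -/
theorem linear_extension_reduces_to_alexander_pair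
    {Λ : Type u} {G : Λ → Type v} {R : Type w} [Ring R]
    (D : MCQData Λ G) (hD : D.IsMCQ)
    (f₁ f₂ : (Σ l, G l) → (Σ l, G l) → R) (f₃ f₄ : ∀ l : Λ, G l → G l → R)
    (hc : MCQData.Conds D f₁ f₂ f₃ f₄)
    (M : Type x) [AddCommGroup M] [Module R M] :
    ∃ g₁ g₂ : (Σ l, G l) → (Σ l, G l) → R,
      D.IsMCQAlexanderPair g₁ g₂ ∧
      ∃ φ : (Σ l, G l × M) → (Σ l, G l × M),
        MCQData.IsMCQHom (MCQData.quadExt D f₁ f₂ f₃ f₄ M)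
          (MCQData.alexExt D g₁ g₂ M) φ ∧
        Function.Bijective φ := by
  classical
  obtain ⟨⟨massoc, honel, honer, hinvl, hinvr⟩, hconj, hopone, hopmul, hdist, hcomp⟩ := hD
  obtain ⟨⟨hu, c0ii, c0iii, c0iv⟩, c1i, c1ii, c2i, c2ii, c2iii, c2iv, c3i, c3ii, c3iii,
    c4i, c4ii, c4iii⟩ := hc
  -- generic unit lemmas
  have aux_sq : ∀ {u : R}, IsUnit u → u * u = u → u = 1 := by
    intro u hu' h
    exact hu'.mul_left_cancel (by rw [h, mul_one])
  have aux_inv_comm : ∀ {u v : R}, IsUnit u → u * v = 1 → v * u = 1 := by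
    intro u v hu' h
    obtain ⟨U, hU⟩ := hu'
    have hv : v = ((U⁻¹ : Rˣ) : R) := by
      have : ((U⁻¹ : Rˣ) : R) * (u * v) = ((U⁻¹ : Rˣ) : R) := by rw [h, mul_one]
      rw [← mul_assoc, ← hU, Units.inv_mul, one_mul] at this
      exact this
    rw [hv, ← hU, Units.inv_mul]
  have aux_cancel : ∀ (u : Rˣ) {a b : R}, a * (u : R) = b * (u : R) → a = b := by
    intro u a b h
    have := congrArg (fun t => t * ((u⁻¹ : Rˣ) : R)) h
    simpa [mul_assoc] using this
  -- group lemmas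
  have gmulinv : ∀ (l : Λ) (a b : G l), D.mul l a (D.mul l (D.inv l a) b) = b := by
    intro l a b; rw [← massoc, hinvr, honel]
  have gmulinv' : ∀ (l : Λ) (a b : G l), D.mul l (D.inv l a) (D.mul l a b) = b := by
    intro l a b; rw [← massoc, hinvl, honel]
  have ginv_r : ∀ (l : Λ) (a b : G l), D.mul l a b = D.one l → b = D.inv l a := by
    intro l a b h
    have h2 : D.mul l (D.inv l a) (D.mul l a b) = D.inv l a := by rw [h, honer]
    rw [gmulinv'] at h2; exact h2
  have ginv_one : ∀ l : Λ, D.inv l (D.one l) = D.one l := fun l =>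
    (ginv_r l (D.one l) (D.one l) (honel l (D.one l))).symm
  have ginv_inv : ∀ (l : Λ) (a : G l), D.inv l (D.inv l a) = a := fun l a =>
    (ginv_r l (D.inv l a) a (hinvl l a)).symm
  have ginv_mul : ∀ (l : Λ) (a b : G l),
      D.inv l (D.mul l a b) = D.mul l (D.inv l b) (D.inv l a) := by
    intro l a b
    refine (ginv_r l _ _ ?_).symm
    rw [massoc, gmulinv, hinvr]
  have gsq : ∀ (l : Λ) (a : G l), D.mul l (D.mul l a a) (D.inv l a) = a := by
    intro l a; rw [massoc, hinvr, honer]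
  -- f₃ / f₄ lemmas
  have L1 : ∀ (l : Λ) (a : G l), f₃ l a (D.one l) = 1 := by
    intro l a
    have s := c0ii l a (D.one l) (D.one l)
    rw [honer, honer] at s
    exact aux_sq (hu l a (D.one l)).1 s
  have L2 : ∀ l : Λ, f₄ l (D.one l) (D.one l) = 1 := by
    intro l
    have s := c0iv l (D.one l) (D.one l) (D.one l)
    rw [honel] at s
    exact aux_sq (hu l (D.one l) (D.one l)).2 s.symm
  have L3 : ∀ (l : Λ) (a : G l), f₃ l (D.one l) a * f₃ l a (D.inv l a) = 1 := by
    intro l a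
    have s := c0ii l a (D.inv l a) a
    rw [hinvr, hinvl, L1] at s
    exact s
  have L3' : ∀ (l : Λ) (a : G l), f₃ l a (D.inv l a) * f₃ l (D.one l) a = 1 := fun l a =>
    aux_inv_comm (hu l (D.one l) a).1 (L3 l a)
  have claimAf : ∀ (l : Λ) (a b : G l),
      f₃ l (D.mul l a b) (D.inv l (D.mul l a b)) * f₃ l a b = f₃ l a (D.inv l a) := by
    intro l a b
    rw [ginv_mul]
    have s := c0ii l a b (D.mul l (D.inv l b) (D.inv l a))
    rw [gmulinv] at s
    exact s
  have claimBf : ∀ (l : Λ) (a b : G l),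
      f₃ l (D.mul l a b) (D.inv l (D.mul l a b)) * f₄ l a b =
        f₁ ⟨l, D.one l⟩ ⟨l, D.inv l a⟩ * f₃ l b (D.inv l b) := by
    intro l a b
    have s1 := c0iii l a b (D.mul l (D.inv l b) (D.inv l a))
    rw [gmulinv] at s1
    have s2 := c0ii l b (D.inv l b) (D.inv l a)
    rw [hinvr] at s2
    have s3 := c1i l (D.one l) (D.inv l a)
    rw [ginv_inv, honel] at s3
    rw [ginv_mul, s1, ← s2, ← mul_assoc, ← s3]
  have claimI : ∀ (l : Λ) (a : G l),
      f₁ ⟨l, D.one l⟩ ⟨l, a⟩ * f₃ l a (D.inv l a) +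
        f₃ l a (D.inv l a) * f₂ ⟨l, a⟩ ⟨l, a⟩ = f₃ l a (D.inv l a) := by
    intro l a
    have p1 : f₁ ⟨l, D.one l⟩ ⟨l, a⟩ * f₃ l a (D.inv l a) = f₄ l (D.inv l a) a := by
      have s := c1i l (D.one l) a
      rw [honel] at s
      rw [s, mul_assoc, L3, mul_one]
    have p3 : f₃ l a (D.inv l a) * f₃ l (D.inv l a) (D.mul l a a) = f₃ l (D.inv l a) a := by
      have s := c0ii l (D.inv l a) (D.mul l a a) (D.inv l a)
      rw [gmulinv', gsq] at s
      exact s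
    have p4 : f₃ l a (D.inv l a) * f₄ l (D.inv l a) (D.mul l a a) =
        f₄ l (D.inv l a) a * f₃ l (D.mul l a a) (D.inv l a) := by
      have s := c0iii l (D.inv l a) (D.mul l a a) (D.inv l a)
      rw [gmulinv', gsq] at s
      exact s
    have p5 : f₃ l (D.mul l a a) (D.inv l a) * f₄ l a a =
        f₄ l a (D.one l) * f₃ l a (D.inv l a) := by
      have s := c0iii l a a (D.inv l a)
      rw [hinvr] at s
      exact s
    have p6 : f₃ l (D.inv l a) a * (f₄ l (D.inv l a) (D.one l) * f₃ l a (D.inv l a)) =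
        f₄ l (D.inv l a) a := by
      have s := c0iii l (D.inv l a) a (D.inv l a)
      rw [hinvl, hinvr] at s
      have t : f₃ l (D.inv l a) a * f₃ l (D.one l) (D.inv l a) = 1 := by
        have t0 := L3' l (D.inv l a)
        rw [ginv_inv] at t0
        exact t0
      rw [← s, ← mul_assoc, t, one_mul]
    have p7 : f₄ l (D.inv l a) a * f₄ l a (D.one l) = 1 := by
      have s := c0iv l (D.inv l a) a (D.one l)
      rw [hinvl, honer] at s
      rw [← s]
      exact L2 l
    have hx : f₃ l a (D.inv l a) *
        (f₃ l (D.inv l a) (D.mul l a a) * f₄ l (D.inv l a) (D.one l) * f₃ l a (D.inv l a)) =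
        f₄ l (D.inv l a) a := by
      rw [← mul_assoc, ← mul_assoc, p3, mul_assoc, p6]
    have hy : f₃ l a (D.inv l a) * (f₄ l (D.inv l a) (D.mul l a a) * f₄ l a a) =
        f₃ l a (D.inv l a) := by
      rw [← mul_assoc, p4, mul_assoc, p5, ← mul_assoc, p7, one_mul]
    rw [p1, c1ii l a a, mul_add, mul_neg, hx, hy]
    abel
  -- op lemmas
  have op_one : ∀ (l : Λ) (a : G l) (x : Σ l, G l) (m : Λ) (a' : G m),
      D.op ⟨l, a⟩ x = ⟨m, a'⟩ → D.op ⟨l, D.one l⟩ x = ⟨m, D.one m⟩ := by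
    intro l a x m a' hx
    obtain ⟨m₁, u, v, r1, r2, r3⟩ := hcomp l a (D.one l) x
    rw [hx] at r1
    injection r1 with e1 e2
    subst e1
    obtain ⟨m₂, p, q, s1, s2, s3⟩ := hcomp l (D.one l) (D.one l) x
    rw [r2] at s1
    injection s1 with e3 e4
    subst e3
    have e4' : v = p := eq_of_heq e4
    rw [r2] at s2
    injection s2 with e5 e6
    have e6' : v = q := e6
    rw [honel, r2] at s3
    injection s3 with e7 e8
    have e8' : v = D.mul m p q := e8
    rw [← e4', ← e6'] at e8'
    have hv : v = D.one m := by
      have h9 := congrArg (D.mul m (D.inv m v)) e8'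
      rw [hinvl, ← massoc, hinvl, honel] at h9
      exact h9.symm
    rw [r2, hv]
  have op_inv : ∀ (l : Λ) (a : G l) (x : Σ l, G l) (m : Λ) (a' : G m),
      D.op ⟨l, a⟩ x = ⟨m, a'⟩ → D.op ⟨l, D.inv l a⟩ x = ⟨m, D.inv m a'⟩ := by
    intro l a x m a' hx
    obtain ⟨m₁, u, v, r1, r2, r3⟩ := hcomp l a (D.inv l a) x
    rw [hx] at r1
    injection r1 with e1 e2
    subst e1
    have e2' : a' = u := eq_of_heq e2
    subst e2'
    rw [hinvr, op_one l a x m a' hx] at r3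
    injection r3 with e3 e4
    have e4' : D.mul m a' v = D.one m := e4.symm
    rw [r2, ginv_r m a' v e4']
  have op_self : ∀ (l : Λ) (a : G l), D.op ⟨l, a⟩ ⟨l, a⟩ = ⟨l, a⟩ := by
    intro l a
    rw [hconj]
    exact congrArg (Sigma.mk l) (by rw [hinvl, honel])
  -- the unit-valued map h
  set H : (Σ l, G l) → Rˣ := fun x => ((hu x.1 x.2 (D.inv x.1 x.2)).1).unit with hHdef
  have hH : ∀ (l : Λ) (a : G l), ((H ⟨l, a⟩ : Rˣ) : R) = f₃ l a (D.inv l a) := by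
    intro l a
    rw [hHdef]
    exact (hu l a (D.inv l a)).1.unit_spec
  set g₁ : (Σ l, G l) → (Σ l, G l) → R := MCQgOne D f₁ H with hg1def
  set g₂ : (Σ l, G l) → (Σ l, G l) → R := MCQgTwo D f₂ H with hg2def
  have g1_spec : ∀ x y : Σ l, G l,
      g₁ x y * ((H x : Rˣ) : R) = ((H (D.op x y) : Rˣ) : R) * f₁ x y := by
    intro x y
    simp only [hg1def, MCQgOne]
    exact Units.inv_mul_cancel_right _ _
  have g2_spec : ∀ x y : Σ l, G l,
      g₂ x y * ((H y : Rˣ) : R) = ((H (D.op x y) : Rˣ) : R) * f₂ x y := by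
    intro x y
    simp only [hg2def, MCQgTwo]
    exact Units.inv_mul_cancel_right _ _
  have claimA' : ∀ (l : Λ) (a b : G l),
      ((H ⟨l, D.mul l a b⟩ : Rˣ) : R) * f₃ l a b = ((H ⟨l, a⟩ : Rˣ) : R) := by
    intro l a b
    rw [hH, hH]
    exact claimAf l a b
  have claimG1 : ∀ (l : Λ) (a : G l) (x : Σ l, G l),
      f₁ ⟨l, D.one l⟩ x * ((H ⟨l, a⟩ : Rˣ) : R) =
        ((H (D.op ⟨l, a⟩ x) : Rˣ) : R) * f₁ ⟨l, a⟩ x := by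
    intro l a x
    obtain ⟨m, a', b', r1, r2, r3⟩ := hcomp l a a x
    have rinv := op_inv l a x m a' r1
    have h4 := c4i l a (D.inv l a) x m a' (D.inv m a') r1 rinv
    rw [hinvr] at h4
    rw [hH, r1, hH]
    exact h4
  have g1_const : ∀ (l : Λ) (a : G l) (x : Σ l, G l),
      g₁ ⟨l, a⟩ x = f₁ ⟨l, D.one l⟩ x := by
    intro l a x
    apply aux_cancel (H ⟨l, a⟩)
    rw [g1_spec]
    exact (claimG1 l a x).symm
  have claimB' : ∀ (l : Λ) (a b : G l),
      ((H ⟨l, D.mul l a b⟩ : Rˣ) : R) * f₄ l a b =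
        g₁ ⟨l, a⟩ ⟨l, D.inv l a⟩ * ((H ⟨l, b⟩ : Rˣ) : R) := by
    intro l a b
    rw [g1_const, hH, hH]
    exact claimBf l a b
  -- Alexander pair conditions
  have A2 : ∀ (l : Λ) (a b : G l) (x : Σ l, G l), g₁ ⟨l, a⟩ x = g₁ ⟨l, b⟩ x := by
    intro l a b x
    rw [g1_const, g1_const]
  have A4 : ∀ (x : Σ l, G l) (l : Λ), g₁ x ⟨l, D.one l⟩ = 1 := by
    intro x l
    apply aux_cancel (H x)
    rw [g1_spec, hopone, c2i, mul_one, one_mul]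
  have A5 : ∀ (x : Σ l, G l) (l : Λ) (a b : G l),
      g₁ x ⟨l, D.mul l a b⟩ = g₁ (D.op x ⟨l, a⟩) ⟨l, b⟩ * g₁ x ⟨l, a⟩ := by
    intro x l a b
    apply aux_cancel (H x)
    conv_lhs => rw [g1_spec, c2ii, hopmul, ← mul_assoc]
    conv_rhs => rw [mul_assoc, g1_spec, ← mul_assoc, g1_spec]
  have A6 : ∀ (x : Σ l, G l) (l : Λ) (a b : G l),
      g₂ x ⟨l, D.mul l a b⟩ = g₁ (D.op x ⟨l, a⟩) ⟨l, b⟩ * g₂ x ⟨l, a⟩ := by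
    intro x l a b
    apply aux_cancel (H ⟨l, a⟩)
    conv_lhs => rw [← claimA' l a b, ← mul_assoc, g2_spec, mul_assoc, c2iii, hopmul,
      ← mul_assoc]
    conv_rhs => rw [mul_assoc, g2_spec, ← mul_assoc, g1_spec]
  have A1 : ∀ (l : Λ) (a b : G l),
      g₁ ⟨l, a⟩ ⟨l, b⟩ + g₂ ⟨l, a⟩ ⟨l, b⟩ = g₁ ⟨l, a⟩ ⟨l, D.mul l (D.inv l a) b⟩ := by
    intro l a b
    have hsum : g₁ ⟨l, a⟩ ⟨l, a⟩ + g₂ ⟨l, a⟩ ⟨l, a⟩ = 1 := by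
      apply aux_cancel (H ⟨l, a⟩)
      rw [add_mul, g1_spec, g2_spec, op_self, one_mul]
      have e1 : ((H ⟨l, a⟩ : Rˣ) : R) * f₁ ⟨l, a⟩ ⟨l, a⟩ =
          f₁ ⟨l, D.one l⟩ ⟨l, a⟩ * ((H ⟨l, a⟩ : Rˣ) : R) := by
        have := claimG1 l a ⟨l, a⟩
        rw [op_self] at this
        exact this.symm
      rw [e1, hH]
      exact claimI l a
    obtain ⟨c, rfl⟩ : ∃ c, b = D.mul l a c :=
      ⟨D.mul l (D.inv l a) b, (gmulinv l a b).symm⟩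
    rw [gmulinv']
    rw [A5 ⟨l, a⟩ l a c, A6 ⟨l, a⟩ l a c, op_self, ← mul_add, hsum, mul_one]
  have A3 : ∀ (l : Λ) (a b : G l) (x : Σ l, G l),
      g₂ ⟨l, D.mul l a b⟩ x =
        g₂ ⟨l, a⟩ x + g₁ (D.op ⟨l, b⟩ x) (D.op ⟨l, D.inv l a⟩ x) * g₂ ⟨l, b⟩ x := by
    intro l a b x
    obtain ⟨m, a', b', r1, r2, r3⟩ := hcomp l a b x
    have rinv := op_inv l a x m a' r1
    apply aux_cancel (H x)
    rw [add_mul, mul_assoc, g2_spec, g2_spec, g2_spec, r3, r1, r2, rinv,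
      c4iii l a b x m a' b' r1 r2, mul_add, ← mul_assoc, ← mul_assoc, claimA',
      claimB' m a' b', g1_const, mul_assoc]
    rw [g1_const]
  have A7 : ∀ x y z : Σ l, G l,
      g₁ (D.op x y) z * g₁ x y = g₁ (D.op x z) (D.op y z) * g₁ x z := by
    intro x y z
    apply aux_cancel (H x)
    conv_lhs => rw [mul_assoc, g1_spec, ← mul_assoc, g1_spec, mul_assoc, c3i, hdist,
      ← mul_assoc]
    conv_rhs => rw [mul_assoc, g1_spec, ← mul_assoc, g1_spec]
  have A8 : ∀ x y z : Σ l, G l,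
      g₁ (D.op x y) z * g₂ x y = g₂ (D.op x z) (D.op y z) * g₁ y z := by
    intro x y z
    apply aux_cancel (H y)
    conv_lhs => rw [mul_assoc, g2_spec, ← mul_assoc, g1_spec, mul_assoc, c3ii, hdist,
      ← mul_assoc]
    conv_rhs => rw [mul_assoc, g1_spec, ← mul_assoc, g2_spec]
  have A9 : ∀ x y z : Σ l, G l,
      g₂ (D.op x y) z =
        g₁ (D.op x z) (D.op y z) * g₂ x z + g₂ (D.op x z) (D.op y z) * g₂ y z := by
    intro x y z
    apply aux_cancel (H z)
    conv_lhs => rw [g2_spec, c3iii, hdist, mul_add]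
    conv_rhs => rw [add_mul, mul_assoc, g2_spec, ← mul_assoc, g1_spec,
      mul_assoc _ _ (f₂ x z), mul_assoc (g₂ (D.op x z) (D.op y z)), g2_spec,
      ← mul_assoc (g₂ (D.op x z) (D.op y z)), g2_spec, mul_assoc _ _ (f₂ y z)]
  refine ⟨g₁, g₂, ⟨A1, A2, A3, A4, A5, A6, A7, A8, A9⟩,
    fun z => ⟨z.1, (z.2.1, ((H ⟨z.1, z.2.1⟩ : Rˣ) : R) • z.2.2)⟩, ⟨?_, ?_⟩, ?_⟩
  · -- op-preserving
    rintro ⟨l, a, u⟩ ⟨m, b, v⟩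
    show (⟨(D.op ⟨l, a⟩ ⟨m, b⟩).1, ((D.op ⟨l, a⟩ ⟨m, b⟩).2,
        ((H ⟨(D.op ⟨l, a⟩ ⟨m, b⟩).1, (D.op ⟨l, a⟩ ⟨m, b⟩).2⟩ : Rˣ) : R) •
          (f₁ ⟨l, a⟩ ⟨m, b⟩ • u + f₂ ⟨l, a⟩ ⟨m, b⟩ • v))⟩ : Σ l, G l × M) =
      ⟨(D.op ⟨l, a⟩ ⟨m, b⟩).1, ((D.op ⟨l, a⟩ ⟨m, b⟩).2,
        g₁ ⟨l, a⟩ ⟨m, b⟩ • (((H ⟨l, a⟩ : Rˣ) : R) • u) +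
          g₂ ⟨l, a⟩ ⟨m, b⟩ • (((H ⟨m, b⟩ : Rˣ) : R) • v))⟩
    rw [Sigma.eta]
    refine congrArg (fun t => (⟨(D.op ⟨l, a⟩ ⟨m, b⟩).1,
      ((D.op ⟨l, a⟩ ⟨m, b⟩).2, t)⟩ : Σ l, G l × M)) ?_
    rw [smul_add, smul_smul, smul_smul, smul_smul, smul_smul, ← g1_spec, ← g2_spec]
  · -- multiplication-preserving
    intro l p q
    refine ⟨l, (p.1, ((H ⟨l, p.1⟩ : Rˣ) : R) • p.2),
      (q.1, ((H ⟨l, q.1⟩ : Rˣ) : R) • q.2), rfl, rfl, ?_⟩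
    show (⟨l, (D.mul l p.1 q.1,
        ((H ⟨l, D.mul l p.1 q.1⟩ : Rˣ) : R) •
          (f₃ l p.1 q.1 • p.2 + f₄ l p.1 q.1 • q.2))⟩ : Σ l, G l × M) =
      ⟨l, (D.mul l p.1 q.1,
        ((H ⟨l, p.1⟩ : Rˣ) : R) • p.2 +
          g₁ ⟨l, p.1⟩ ⟨l, D.inv l p.1⟩ • (((H ⟨l, q.1⟩ : Rˣ) : R) • q.2))⟩
    refine congrArg (fun t => (⟨l, (D.mul l p.1 q.1, t)⟩ : Σ l, G l × M)) ?_
    rw [smul_add, smul_smul, smul_smul, smul_smul, claimA', claimB']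
  · -- bijective
    refine Function.bijective_iff_has_inverse.mpr
      ⟨fun z => ⟨z.1, (z.2.1, (((H ⟨z.1, z.2.1⟩)⁻¹ : Rˣ) : R) • z.2.2)⟩, ?_, ?_⟩
    · rintro ⟨l, a, u⟩
      show (⟨l, (a, (((H ⟨l, a⟩)⁻¹ : Rˣ) : R) • (((H ⟨l, a⟩ : Rˣ) : R) • u))⟩ :
        Σ l, G l × M) = ⟨l, (a, u)⟩
      rw [smul_smul, Units.inv_mul, one_smul]
    · rintro ⟨l, a, u⟩
      show (⟨l, (a, ((H ⟨l, a⟩ : Rˣ) : R) • ((((H ⟨l, a⟩)⁻¹ : Rˣ) : R) • u))⟩ :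
        Σ l, G l × M) = ⟨l, (a, u)⟩
      rw [smul_smul, Units.mul_inv, one_smul]
end
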